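/- arXiv:2007.03497 — 6 statements merged into one kernel-verified Lean document; each statement's English description precedes it below -/
import Mathlib

section
/- Let λ_h > 0 and let λ_1, …, λ_I (I ≥ 1) be strictly positive, pairwise distinct real numbers. Let A ~ Exp(λ_h) and let B = X_1 + … + X_I be a sum of independent Exp(λ_i) random variables, with A independent of B. Then the ratio Q = A / B has probability density function f_Q(q) = λ_h (∏_{j=1}^I λ_j) · Σ_{i=1}^I 1 / [ (λ_h q + λ_i)² · ∏_{j≠i} (λ_j − λ_i) ] for q > 0, with respect to Lebesgue measure. -/
open MeasureTheory ProbabilityTheory Real Finset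

set_option maxHeartbeats 1000000

lemma exp_ratio_aux_integral {r : ℝ} (hr : 0 < r) :
    ∫ x in Set.Ioi (0:ℝ), Real.exp (-(r * x)) = 1 / r := by
  have h := integral_rpow_mul_exp_neg_mul_Ioi (a := 1) one_pos hr
  simpa using h

lemma expMeasure_Iic {r : ℝ} (hr : 0 < r) (x : ℝ) :
    expMeasure r (Set.Iic x) = ENNReal.ofReal (if 0 ≤ x then 1 - Real.exp (-(r * x)) else 0) := by
  rw [show expMeasure r = volume.withDensity (exponentialPDF r) from rfl,
    withDensity_apply _ measurableSet_Iic]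
  exact lintegral_exponentialPDF_eq_antiDeriv hr x

lemma expMeasure_Iic' {r : ℝ} (hr : 0 < r) (x : ℝ) :
    expMeasure r (Set.Iic x) = ENNReal.ofReal (if 0 ≤ x then 1 - Real.exp (-(r * x)) else 0) := by
  rw [show expMeasure r = volume.withDensity (exponentialPDF r) from rfl,
    withDensity_apply _ measurableSet_Iic]
  exact lintegral_exponentialPDF_eq_antiDeriv hr x

lemma exp_ratio_lagrange {n : ℕ} (hn : 0 < n) (lam : Fin n → ℝ)
    (hdist : Function.Injective lam) (t : ℝ) (ht : ∀ j, t + lam j ≠ 0) :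
    ∑ i, ((t + lam i) * ∏ j ∈ Finset.univ.erase i, (lam j - lam i))⁻¹
      = (∏ j, (t + lam j))⁻¹ := by
  have : Nonempty (Fin n) := ⟨⟨0, hn⟩⟩
  have hv : Set.InjOn (fun i => -lam i) (Finset.univ : Finset (Fin n)) := by
    intro i _ j _ h
    exact hdist (neg_injective h)
  have hsum := Lagrange.sum_basis hv Finset.univ_nonempty
  have heval := congrArg (Polynomial.eval t) hsum
  simp only [Polynomial.eval_finset_sum, Polynomial.eval_one, Lagrange.basis,
    Polynomial.eval_prod, Lagrange.basisDivisor, Polynomial.eval_mul, Polynomial.eval_C,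
    Polynomial.eval_sub, Polynomial.eval_X, sub_neg_eq_add, neg_sub_neg, neg_add_eq_sub] at heval
  -- heval : ∑ i, ∏ j ∈ univ.erase i, ((lam j - lam i)⁻¹ * (t + lam j)) = 1  (hopefully)
  have hP : (∏ j, (t + lam j)) ≠ 0 := Finset.prod_ne_zero_iff.2 fun j _ => ht j
  have key : ∀ i : Fin n, ((t + lam i) * ∏ j ∈ Finset.univ.erase i, (lam j - lam i))⁻¹
      = (∏ j ∈ Finset.univ.erase i, ((lam j - lam i)⁻¹ * (t + lam j))) * (∏ j, (t + lam j))⁻¹ := by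
    intro i
    have he : (∏ j ∈ Finset.univ.erase i, (t + lam j)) * (t + lam i) = ∏ j, (t + lam j) := by
      rw [mul_comm]
      exact Finset.mul_prod_erase Finset.univ (fun j => t + lam j) (Finset.mem_univ i)
    have hei : (∏ j ∈ Finset.univ.erase i, (t + lam j)) ≠ 0 :=
      Finset.prod_ne_zero_iff.2 fun j _ => ht j
    rw [Finset.prod_mul_distrib, Finset.prod_inv_distrib, mul_inv]
    rw [← he, mul_inv, ← mul_assoc, mul_comm ((t+lam i)⁻¹)]
    rw [mul_assoc ((∏ j ∈ Finset.univ.erase i, (lam j - lam i))⁻¹), mul_assoc,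
      mul_inv_cancel₀ hei, one_mul, mul_comm]
  calc ∑ i, ((t + lam i) * ∏ j ∈ Finset.univ.erase i, (lam j - lam i))⁻¹
      = ∑ i, (∏ j ∈ Finset.univ.erase i, ((lam j - lam i)⁻¹ * (t + lam j))) * (∏ j, (t + lam j))⁻¹ := by
        exact Finset.sum_congr rfl fun i _ => key i
    _ = (∑ i, ∏ j ∈ Finset.univ.erase i, ((lam j - lam i)⁻¹ * (t + lam j))) * (∏ j, (t + lam j))⁻¹ := by
        rw [Finset.sum_mul]
    _ = (∏ j, (t + lam j))⁻¹ := by rw [heval, one_mul]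

lemma exp_ratio_deriv_id {n : ℕ} (hn : 0 < n) (lam : Fin n → ℝ) (hpos : ∀ i, 0 < lam i)
    (hdist : Function.Injective lam) {t : ℝ} (ht : 0 ≤ t) :
    ∑ i, ((t + lam i) ^ 2 * ∏ j ∈ Finset.univ.erase i, (lam j - lam i))⁻¹
      = (∑ i, (t + lam i)⁻¹) * (∏ j, (t + lam j))⁻¹ := by
  have hne : Nonempty (Fin n) := ⟨⟨0, hn⟩⟩
  set m : ℝ := Finset.univ.inf' Finset.univ_nonempty lam with hm
  have hmpos : 0 < m := by
    obtain ⟨i, _, hi⟩ := Finset.exists_mem_eq_inf' Finset.univ_nonempty lam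
    rw [hm, hi]; exact hpos i
  have hmem : ∀ s ∈ Set.Ioi (-m), ∀ j, 0 < s + lam j := by
    intro s hs j
    have h1 : m ≤ lam j := Finset.inf'_le _ (Finset.mem_univ j)
    have h2 := Set.mem_Ioi.mp hs
    linarith
  have htU : t ∈ Set.Ioi (-m) := by simp only [Set.mem_Ioi]; linarith
  set C : Fin n → ℝ := fun i => ∏ j ∈ Finset.univ.erase i, (lam j - lam i) with hC
  have h1 : HasDerivAt (fun s => ∑ i, ((s + lam i)⁻¹ * (C i)⁻¹))
      (∑ i, -(((t + lam i) ^ 2)⁻¹ * (C i)⁻¹)) t := by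
    apply HasDerivAt.fun_sum
    intro i _
    have hne0 : t + lam i ≠ 0 := (hmem t htU i).ne'
    have hd := (((hasDerivAt_id t).add_const (lam i)).inv hne0).mul_const (C i)⁻¹
    refine hd.congr_deriv ?_
    simp only [id]
    ring
  have hprod : HasDerivAt (fun s => ∏ j, (s + lam j))
      (∑ i, ∏ j ∈ Finset.univ.erase i, (t + lam j)) t := by
    have hd := HasDerivAt.fun_finsetProd (u := Finset.univ) (f := fun j s => s + lam j)
      (f' := fun _ => 1) (x := t) (fun j _ => (hasDerivAt_id t).add_const (lam j))
    simpa using hd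
  have hPne : (∏ j, (t + lam j)) ≠ 0 :=
    (Finset.prod_pos fun j _ => hmem t htU j).ne'
  have h2 : HasDerivAt (fun s => (∏ j, (s + lam j))⁻¹)
      (-(∑ i, ∏ j ∈ Finset.univ.erase i, (t + lam j)) / (∏ j, (t + lam j)) ^ 2) t :=
    hprod.inv hPne
  have heq : (fun s => ∑ i, ((s + lam i)⁻¹ * (C i)⁻¹))
      =ᶠ[nhds t] (fun s => (∏ j, (s + lam j))⁻¹) := by
    filter_upwards [isOpen_Ioi.mem_nhds htU] with s hs
    have hl := exp_ratio_lagrange hn lam hdist s (fun j => (hmem s hs j).ne')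
    rw [← hl]
    exact Finset.sum_congr rfl fun i _ => by rw [mul_inv]
  have h2' : HasDerivAt (fun s => ∑ i, ((s + lam i)⁻¹ * (C i)⁻¹))
      (-(∑ i, ∏ j ∈ Finset.univ.erase i, (t + lam j)) / (∏ j, (t + lam j)) ^ 2) t :=
    h2.congr_of_eventuallyEq heq
  have hD := h1.unique h2'
  -- hD : ∑ i, -(((t+lam i)^2)⁻¹ * Ci⁻¹) = -(∑ ∏erase)/(P^2)
  have hD' : ∑ i, (((t + lam i) ^ 2)⁻¹ * (C i)⁻¹)
      = (∑ i, ∏ j ∈ Finset.univ.erase i, (t + lam j)) / (∏ j, (t + lam j)) ^ 2 := by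
    have h := hD
    rw [Finset.sum_neg_distrib, neg_div] at h
    exact neg_injective h
  have hterm : ∀ i : Fin n, (∏ j ∈ Finset.univ.erase i, (t + lam j)) / (∏ j, (t + lam j)) ^ 2
      = (t + lam i)⁻¹ * (∏ j, (t + lam j))⁻¹ := by
    intro i
    have he : (t + lam i) * (∏ j ∈ Finset.univ.erase i, (t + lam j)) = ∏ j, (t + lam j) :=
      Finset.mul_prod_erase Finset.univ (fun j => t + lam j) (Finset.mem_univ i)
    have hi0 : t + lam i ≠ 0 := (hmem t htU i).ne'
    have hei : (∏ j ∈ Finset.univ.erase i, (t + lam j)) ≠ 0 :=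
      (Finset.prod_pos fun j _ => hmem t htU j).ne'
    rw [← he]
    field_simp
  calc ∑ i, ((t + lam i) ^ 2 * C i)⁻¹
      = ∑ i, (((t + lam i) ^ 2)⁻¹ * (C i)⁻¹) := by
        exact Finset.sum_congr rfl fun i _ => by rw [mul_inv]
    _ = (∑ i, ∏ j ∈ Finset.univ.erase i, (t + lam j)) / (∏ j, (t + lam j)) ^ 2 := hD'
    _ = ∑ i, ((t + lam i)⁻¹ * (∏ j, (t + lam j))⁻¹) := by
        rw [Finset.sum_div]
        exact Finset.sum_congr rfl fun i _ => hterm i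
    _ = (∑ i, (t + lam i)⁻¹) * (∏ j, (t + lam j))⁻¹ := by rw [Finset.sum_mul]

lemma integral_exp_neg_expMeasure {r : ℝ} (hr : 0 < r) {s : ℝ} (hs : 0 ≤ s) :
    ∫ x, Real.exp (-(s * x)) ∂(expMeasure r) = r / (r + s) := by
  have hrs : 0 < r + s := by linarith
  have hmeas : Measurable fun x : ℝ => Real.exp (-(s * x)) := by fun_prop
  rw [integral_eq_lintegral_of_nonneg_ae (Filter.Eventually.of_forall fun x => (exp_pos _).le)
    hmeas.aestronglyMeasurable]
  rw [show expMeasure r = volume.withDensity (exponentialPDF r) from rfl]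
  rw [lintegral_withDensity_eq_lintegral_mul _ (show Measurable (exponentialPDF r) from (measurable_exponentialPDFReal r).ennreal_ofReal)
    (by fun_prop)]
  have hpt : ∫⁻ x, (exponentialPDF r * fun a => ENNReal.ofReal (Real.exp (-(s * a)))) x
      = ∫⁻ x, Set.indicator (Set.Ici (0:ℝ))
          (fun x => ENNReal.ofReal (r * Real.exp (-((r+s) * x)))) x := by
    refine lintegral_congr fun x => ?_
    rw [Pi.mul_apply, exponentialPDF_eq, Set.indicator_apply]
    by_cases hx : 0 ≤ x
    · rw [if_pos hx, if_pos (Set.mem_Ici.mpr hx), ← ENNReal.ofReal_mul (by positivity)]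
      congr 1
      rw [mul_assoc, ← Real.exp_add]
      ring_nf
    · rw [if_neg hx, if_neg (fun h => hx (Set.mem_Ici.mp h)), ENNReal.ofReal_zero, zero_mul]
  rw [hpt, lintegral_indicator measurableSet_Ici _]
  rw [show (volume : Measure ℝ).restrict (Set.Ici 0) = (volume : Measure ℝ).restrict (Set.Ioi 0) from
    (Measure.restrict_congr_set Ioi_ae_eq_Ici).symm]
  rw [← ofReal_integral_eq_lintegral_ofReal]
  · rw [MeasureTheory.integral_const_mul, exp_ratio_aux_integral hrs]
    rw [ENNReal.toReal_ofReal (by positivity)]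
    field_simp
  · have h1 : IntegrableOn (fun x : ℝ ↦ Real.exp (-(r+s) * x)) (Set.Ioi 0) :=
      exp_neg_integrableOn_Ioi 0 hrs
    have h2 : IntegrableOn (fun x ↦ r * Real.exp (-((r+s) * x))) (Set.Ioi 0) := by
      have := h1.const_mul r
      simp only [IntegrableOn] at this ⊢
      convert this using 2 with x
      ring_nf
    exact h2
  · exact Filter.Eventually.of_forall fun x => by positivity

/-- If `A ~ Exp(λ_h)` is independent of `B`, a sum of `I ≥ 1` independent exponential random
variables with strictly positive pairwise distinct rates `λ i`, then `Q = A / B` has density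
`q ↦ λ_h (∏ j, λ j) Σ i, 1 / ((λ_h q + λ i)² ∏_{j ≠ i} (λ j − λ i))` for `q > 0`
with respect to Lebesgue measure. -/
theorem ratio_exponential_hypoexponential_pdf
    {Ω : Type*} [MeasureSpace Ω] [IsProbabilityMeasure (ℙ : Measure Ω)]
    (lamh : ℝ) (hlamh : 0 < lamh)
    (I : ℕ) (hI : 1 ≤ I)
    (lam : Fin I → ℝ) (hpos : ∀ i, 0 < lam i) (hdist : Function.Injective lam)
    (A : Ω → ℝ) (hAmeas : Measurable A)
    (hAlaw : Measure.map A ℙ = expMeasure lamh)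
    (X : Fin I → Ω → ℝ) (hmeas : ∀ i, Measurable (X i))
    (hindep : iIndepFun X ℙ)
    (hlaw : ∀ i, Measure.map (X i) ℙ = expMeasure (lam i))
    (hAB : IndepFun A (fun ω => ∑ i, X i ω) ℙ) :
    Measure.map (fun ω => A ω / ∑ i, X i ω) ℙ
      = volume.withDensity (fun q =>
          ENNReal.ofReal (if 0 < q then
              lamh * (∏ j, lam j) *
                ∑ i, 1 / ((lamh * q + lam i) ^ 2 *
                  ∏ j ∈ Finset.univ.erase i, (lam j - lam i))
            else 0)) := by
  have hnI : Nonempty (Fin I) := ⟨⟨0, hI⟩⟩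
  set B : Ω → ℝ := fun ω => ∑ i, X i ω with hB
  set P0 : ℝ := ∏ j, lam j with hP0
  have hP0pos : 0 < P0 := Finset.prod_pos fun j _ => hpos j
  set f : ℝ → ℝ := fun q => if 0 < q then
      lamh * P0 * ∑ i, 1 / ((lamh * q + lam i) ^ 2 *
        ∏ j ∈ Finset.univ.erase i, (lam j - lam i)) else 0 with hf
  have hBmeas : Measurable B := Finset.measurable_sum _ fun i _ => hmeas i
  have hQmeas : Measurable fun ω => A ω / B ω := hAmeas.div hBmeas
  haveI hQprob : IsProbabilityMeasure (Measure.map (fun ω => A ω / B ω) ℙ) :=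
    Measure.isProbabilityMeasure_map hQmeas.aemeasurable
  -- positivity facts
  have hXpos : ∀ i, ∀ᵐ ω ∂ℙ, 0 < X i ω := by
    intro i
    rw [ae_iff]
    have h0 : ℙ (X i ⁻¹' Set.Iic 0) = 0 := by
      rw [← Measure.map_apply (hmeas i) measurableSet_Iic, hlaw i, expMeasure_Iic' (hpos i) 0]
      simp
    convert h0 using 2
    ext ω; simp [not_lt, Set.mem_preimage]
  have hBpos : ∀ᵐ ω ∂ℙ, 0 < B ω := by
    filter_upwards [(ae_all_iff).mpr hXpos] with ω hω
    exact Finset.sum_pos (fun i _ => hω i) Finset.univ_nonempty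
  have hApos : ∀ᵐ ω ∂ℙ, 0 < A ω := by
    rw [ae_iff]
    have h0 : ℙ (A ⁻¹' Set.Iic 0) = 0 := by
      rw [← Measure.map_apply hAmeas measurableSet_Iic, hAlaw, expMeasure_Iic' hlamh 0]
      simp
    convert h0 using 2
    ext ω; simp [not_lt, Set.mem_preimage]
  -- positivity of shifted products
  have hpq : ∀ (y : ℝ), 0 ≤ y → ∀ j, 0 < lamh * y + lam j := by
    intro y hy j
    have := hpos j
    nlinarith
  -- the nonnegative form of the density
  set g : ℝ → ℝ := fun y => lamh * P0 *
      ((∑ i, (lamh * y + lam i)⁻¹) * (∏ j, (lamh * y + lam j))⁻¹) with hg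
  have hfg : ∀ y : ℝ, 0 < y → f y = g y := by
    intro y hy
    rw [hf, hg]
    simp only [if_pos hy]
    rw [← exp_ratio_deriv_id hI lam hpos hdist (by positivity : (0:ℝ) ≤ lamh * y)]
    congr 1
    exact Finset.sum_congr rfl fun i _ => (one_div _)
  have hgnonneg : ∀ y : ℝ, 0 ≤ y → 0 ≤ g y := by
    intro y hy
    have h1 : 0 ≤ ∑ i, (lamh * y + lam i)⁻¹ :=
      Finset.sum_nonneg fun i _ => (inv_nonneg.mpr (hpq y hy i).le)
    have h2 : (0:ℝ) ≤ (∏ j, (lamh * y + lam j))⁻¹ :=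
      inv_nonneg.mpr (Finset.prod_nonneg fun j _ => (hpq y hy j).le)
    rw [hg]; positivity
  have hgcont : ContinuousOn g (Set.Ici 0) := by
    rw [hg]
    refine continuousOn_const.mul (ContinuousOn.mul ?_ (ContinuousOn.inv₀ ?_ ?_))
    · exact continuousOn_finset_sum _ fun i _ => ContinuousOn.inv₀
        (by fun_prop) (fun y hy => (hpq y hy i).ne')
    · exact continuousOn_finset_prod _ fun j _ => by fun_prop
    · exact fun y hy => (Finset.prod_pos fun j _ => hpq y hy j).ne'
  -- antiderivative
  set F : ℝ → ℝ := fun y => -(P0 * (∏ j, (lamh * y + lam j))⁻¹) with hFdef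
  have hderiv : ∀ y : ℝ, 0 ≤ y → HasDerivAt F (g y) y := by
    intro y hy
    have hne : (∏ j, (lamh * y + lam j)) ≠ 0 :=
      (Finset.prod_pos fun j _ => hpq y hy j).ne'
    have hprod : HasDerivAt (fun z => ∏ j, (lamh * z + lam j))
        (∑ i, (∏ j ∈ Finset.univ.erase i, (lamh * y + lam j)) * lamh) y := by
      have hd := HasDerivAt.fun_finsetProd (u := Finset.univ)
        (f := fun j z => lamh * z + lam j) (f' := fun _ => lamh) (x := y)
        (fun j _ => by simpa using ((hasDerivAt_id y).const_mul lamh).add_const (lam j))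
      simpa using hd
    have hF : HasDerivAt F
        (-(P0 * (-(∑ i, (∏ j ∈ Finset.univ.erase i, (lamh * y + lam j)) * lamh) /
          (∏ j, (lamh * y + lam j)) ^ 2))) y := ((hprod.inv hne).const_mul P0).neg
    convert hF using 1
    have hterm : ∀ i : Fin I,
        (∏ j ∈ Finset.univ.erase i, (lamh * y + lam j)) / (∏ j, (lamh * y + lam j)) ^ 2
          = (lamh * y + lam i)⁻¹ * (∏ j, (lamh * y + lam j))⁻¹ := by
      intro i
      have he : (lamh * y + lam i) * (∏ j ∈ Finset.univ.erase i, (lamh * y + lam j))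
          = ∏ j, (lamh * y + lam j) :=
        Finset.mul_prod_erase Finset.univ (fun j => lamh * y + lam j) (Finset.mem_univ i)
      have hi0 : lamh * y + lam i ≠ 0 := (hpq y hy i).ne'
      have hei : (∏ j ∈ Finset.univ.erase i, (lamh * y + lam j)) ≠ 0 :=
        (Finset.prod_pos fun j _ => hpq y hy j).ne'
      rw [← he]
      field_simp
    have hsum : (∑ i, (∏ j ∈ Finset.univ.erase i, (lamh * y + lam j)) * lamh) /
        (∏ j, (lamh * y + lam j)) ^ 2
        = ∑ i, lamh * ((lamh * y + lam i)⁻¹ * (∏ j, (lamh * y + lam j))⁻¹) := by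
      rw [Finset.sum_div]
      refine Finset.sum_congr rfl fun i _ => ?_
      rw [mul_comm _ lamh, mul_div_assoc, hterm i]
    simp only [hg]
    rw [neg_div, mul_neg, neg_neg, hsum, ← Finset.mul_sum, ← Finset.sum_mul]
    ring
  -- the CDF value
  have hcdf_eq : ∀ x : ℝ, 0 < x →
      ∏ i, lam i / (lam i + lamh * x) = P0 * (∏ j, (lamh * x + lam j))⁻¹ := by
    intro x hx
    rw [hP0, ← Finset.prod_inv_distrib, ← Finset.prod_mul_distrib]
    exact Finset.prod_congr rfl fun i _ => by rw [div_eq_mul_inv, add_comm]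
  -- rephrase goal
  have hgoal : Measure.map (fun ω => A ω / B ω) ℙ
      = volume.withDensity (fun q => ENNReal.ofReal (f q)) := by
    refine Measure.ext_of_Iic _ _ fun x => ?_
    rw [Measure.map_apply hQmeas measurableSet_Iic, withDensity_apply _ measurableSet_Iic]
    rcases le_or_gt x 0 with hx | hx
    · -- both sides zero
      have hL : ℙ ((fun ω => A ω / B ω) ⁻¹' Set.Iic x) = 0 := by
        refine measure_eq_zero_iff_ae_notMem.mpr ?_
        filter_upwards [hApos, hBpos] with ω hA' hB'
        simp only [Set.mem_preimage, Set.mem_Iic, not_le]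
        exact lt_of_le_of_lt hx (div_pos hA' hB')
      have hR : ∫⁻ y in Set.Iic x, ENNReal.ofReal (f y) = 0 := by
        have hzero : ∀ y ∈ Set.Iic x, ENNReal.ofReal (f y) = 0 := by
          intro y hy
          simp only [hf]
          rw [if_neg (not_lt.mpr (le_trans (Set.mem_Iic.mp hy) hx)), ENNReal.ofReal_zero]
        rw [setLIntegral_congr_fun measurableSet_Iic hzero, lintegral_zero]
      rw [hL, hR]
    · -- main case x > 0
      set s : ℝ := lamh * x with hs
      have hspos : 0 < s := mul_pos hlamh hx
      haveI hBprob : IsProbabilityMeasure (Measure.map B ℙ) :=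
        Measure.isProbabilityMeasure_map hBmeas.aemeasurable
      have haeB : ∀ᵐ b ∂(Measure.map B ℙ), 0 < b :=
        (ae_map_iff hBmeas.aemeasurable measurableSet_Ioi).mpr hBpos
      have hrestr : (Measure.map B ℙ).restrict (Set.Ioi 0) = Measure.map B ℙ :=
        Measure.restrict_eq_self_of_ae_mem haeB
      -- LHS
      have hS : MeasurableSet {p : ℝ × ℝ | p.2 ≤ x * p.1} :=
        measurableSet_le measurable_snd (measurable_fst.const_mul x)
      have hset : ((fun ω => A ω / B ω) ⁻¹' Set.Iic x : Set Ω)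
          =ᵐ[ℙ] ((fun ω => (B ω, A ω)) ⁻¹' {p : ℝ × ℝ | p.2 ≤ x * p.1}) := by
        rw [Filter.eventuallyEq_set]
        filter_upwards [hBpos] with ω hb
        simp only [Set.mem_preimage, Set.mem_Iic, Set.mem_setOf_eq]
        exact div_le_iff₀ hb
      have hmapBA : Measure.map (fun ω => (B ω, A ω)) ℙ
          = (Measure.map B ℙ).prod (Measure.map A ℙ) :=
        (indepFun_iff_map_prod_eq_prod_map_map hBmeas.aemeasurable hAmeas.aemeasurable).mp hAB.symm
      have hpre : ∀ b : ℝ, (Prod.mk b ⁻¹' {p : ℝ × ℝ | p.2 ≤ x * p.1}) = Set.Iic (x * b) := by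
        intro b; ext a; simp [Set.mem_Iic]
      have hL1 : ℙ ((fun ω => A ω / B ω) ⁻¹' Set.Iic x)
          = ∫⁻ b, Measure.map A ℙ (Set.Iic (x * b)) ∂(Measure.map B ℙ) := by
        rw [measure_congr hset, ← Measure.map_apply (hBmeas.prodMk hAmeas) hS, hmapBA,
          Measure.prod_apply hS]
        exact lintegral_congr fun b => by rw [hpre b]
      have hint1 : ∫⁻ b, Measure.map A ℙ (Set.Iic (x * b)) ∂(Measure.map B ℙ)
          = ∫⁻ b, ENNReal.ofReal (1 - Real.exp (-(s * b))) ∂(Measure.map B ℙ) := by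
        refine lintegral_congr_ae ?_
        filter_upwards [haeB] with b hb
        rw [hAlaw, expMeasure_Iic' hlamh, if_pos (by positivity : (0:ℝ) ≤ x * b)]
        have harg : lamh * (x * b) = s * b := by rw [hs]; ring
        rw [harg]
      have hmexp : Measurable fun b : ℝ => Real.exp (-(s * b)) :=
        Real.measurable_exp.comp ((measurable_const.mul measurable_id).neg)
      have hintexp : Integrable (fun b => Real.exp (-(s * b)))
          ((Measure.map B ℙ).restrict (Set.Ioi 0)) := by
        refine Integrable.mono' (integrable_const 1) hmexp.aestronglyMeasurable ?_
        filter_upwards [ae_restrict_mem measurableSet_Ioi] with b hb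
        rw [Real.norm_eq_abs, abs_of_pos (Real.exp_pos _)]
        refine Real.exp_le_one_iff.mpr ?_
        have hb' := Set.mem_Ioi.mp hb
        nlinarith
      have hintfull : Integrable (fun b => 1 - Real.exp (-(s * b)))
          ((Measure.map B ℙ).restrict (Set.Ioi 0)) := (integrable_const 1).sub hintexp
      have hnn1 : 0 ≤ᵐ[(Measure.map B ℙ).restrict (Set.Ioi 0)]
          (fun b => 1 - Real.exp (-(s * b))) := by
        filter_upwards [ae_restrict_mem measurableSet_Ioi] with b hb
        have hb' := Set.mem_Ioi.mp hb
        have : Real.exp (-(s * b)) ≤ 1 := Real.exp_le_one_iff.mpr (by nlinarith)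
        simp only [Pi.zero_apply]
        linarith
      have hint2 : ∫⁻ b, ENNReal.ofReal (1 - Real.exp (-(s * b))) ∂(Measure.map B ℙ)
          = ENNReal.ofReal (∫ b in Set.Ioi 0, (1 - Real.exp (-(s * b))) ∂(Measure.map B ℙ)) := by
        conv_lhs => rw [← hrestr]
        exact (ofReal_integral_eq_lintegral_ofReal hintfull hnn1).symm
      have hBIoi : Measure.map B ℙ (Set.Ioi 0) = 1 := by
        have hsets : (Set.Ioi (0:ℝ)) =ᵐ[Measure.map B ℙ] Set.univ := by
          rw [Filter.eventuallyEq_set]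
          filter_upwards [haeB] with b hb
          simp [hb]
        rw [measure_congr hsets, measure_univ]
      have hmgfX : ∀ i, mgf (X i) ℙ (-s) = lam i / (lam i + s) := by
        intro i
        rw [mgf]
        have h1 : ∫ ω, Real.exp (-s * X i ω) ∂ℙ
            = ∫ y, Real.exp (-s * y) ∂(Measure.map (X i) ℙ) :=
          (integral_map (hmeas i).aemeasurable
            (Real.measurable_exp.comp (measurable_const.mul measurable_id)).aestronglyMeasurable).symm
        rw [h1, hlaw i]
        simp_rw [neg_mul]
        exact integral_exp_neg_expMeasure (hpos i) hspos.le
      have hmgfB : ∫ b in Set.Ioi 0, Real.exp (-(s * b)) ∂(Measure.map B ℙ)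
          = ∏ i, lam i / (lam i + s) := by
        rw [hrestr]
        have h1 : ∫ b, Real.exp (-(s * b)) ∂(Measure.map B ℙ)
            = ∫ ω, Real.exp (-(s * B ω)) ∂ℙ :=
          integral_map hBmeas.aemeasurable hmexp.aestronglyMeasurable
        have h2 : ∫ ω, Real.exp (-(s * B ω)) ∂ℙ = mgf B ℙ (-s) := by
          rw [mgf]; simp_rw [neg_mul]
        have hBsum : B = ∑ i, X i := by
          funext ω; rw [hB]; simp [Finset.sum_apply]
        rw [h1, h2, hBsum, hindep.mgf_sum hmeas Finset.univ]
        exact Finset.prod_congr rfl fun i _ => hmgfX i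
      have hLHS : ℙ ((fun ω => A ω / B ω) ⁻¹' Set.Iic x)
          = ENNReal.ofReal (1 - ∏ i, lam i / (lam i + s)) := by
        rw [hL1, hint1, hint2]
        congr 1
        rw [integral_sub (integrable_const 1) hintexp, ← hmgfB]
        simp [setIntegral_const, hBIoi, measureReal_def]
      -- RHS
      have hIic : Set.Iic x = Set.Iic 0 ∪ Set.Ioc 0 x := (Set.Iic_union_Ioc_eq_Iic hx.le).symm
      have hz : ∫⁻ y in Set.Iic 0, ENNReal.ofReal (f y) = 0 := by
        have hzero : ∀ y ∈ Set.Iic (0:ℝ), ENNReal.ofReal (f y) = 0 := by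
          intro y hy
          simp only [hf]
          rw [if_neg (not_lt.mpr (Set.mem_Iic.mp hy)), ENNReal.ofReal_zero]
        rw [setLIntegral_congr_fun measurableSet_Iic hzero, lintegral_zero]
      have hgint : IntegrableOn g (Set.Ioc 0 x) volume :=
        ((hgcont.mono (Set.Icc_subset_Ici_self)).integrableOn_Icc).mono_set
          Set.Ioc_subset_Icc_self
      have hgnn : 0 ≤ᵐ[volume.restrict (Set.Ioc 0 x)] g := by
        filter_upwards [ae_restrict_mem measurableSet_Ioc] with y hy
        exact hgnonneg y hy.1.le
      have hR2 : ∫⁻ y in Set.Ioc 0 x, ENNReal.ofReal (f y)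
          = ENNReal.ofReal (∫ y in Set.Ioc 0 x, g y) := by
        rw [setLIntegral_congr_fun measurableSet_Ioc
          (fun y hy => by rw [hfg y hy.1])]
        exact (ofReal_integral_eq_lintegral_ofReal hgint hgnn).symm
      have hftc : ∫ y in Set.Ioc 0 x, g y = F x - F 0 := by
        rw [← _root_.intervalIntegral.integral_of_le hx.le]
        refine intervalIntegral.integral_eq_sub_of_hasDerivAt (fun y hy => ?_) ?_
        · rw [Set.uIcc_of_le hx.le] at hy
          exact hderiv y hy.1
        · rw [intervalIntegrable_iff, Set.uIoc_of_le hx.le]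
          exact hgint
      have hF0 : F 0 = -1 := by
        simp only [hFdef, mul_zero, zero_add]
        rw [← hP0, mul_inv_cancel₀ hP0pos.ne']
      have hFx : F x - F 0 = 1 - ∏ i, lam i / (lam i + s) := by
        rw [hF0, hcdf_eq x hx, hFdef]
        ring
      rw [hLHS, hIic, lintegral_union measurableSet_Ioc (Set.Iic_disjoint_Ioc le_rfl),
        hz, zero_add, hR2, hftc, hFx]
  exact hgoal
end

section
/- Let H be exponentially distributed with rate λ_h > 0, let Φ_k > 0, let Φ_Σ ≥ 0, and let c > 0 satisfy Φ_k > c·Φ_Σ. Then for every s > 0, P[ H·Φ_k / (s·H·Φ_Σ + 1) < c/s ] = 1 − exp( −λ_h c / ( s (Φ_k − c·Φ_Σ) ) ). -/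
open MeasureTheory ProbabilityTheory Real

lemma expMeasure_eq_withDensity (r : ℝ) :
    expMeasure r = MeasureTheory.volume.withDensity (exponentialPDF r) := rfl

lemma exponentialPDF_ae_indicator (r : ℝ) :
    (fun x => exponentialPDF r x)
      =ᵐ[MeasureTheory.volume] (Set.Ioi (0:ℝ)).indicator (fun x => exponentialPDF r x) := by
  have h0 : MeasureTheory.volume ({(0:ℝ)}) = 0 := measure_singleton 0
  filter_upwards [measure_eq_zero_iff_ae_notMem.mp h0] with x hx
  rcases lt_trichotomy x 0 with h | h | h
  · rw [Set.indicator_of_notMem (by simpa using h.not_gt), exponentialPDF_of_neg h]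
  · exact absurd h hx
  · rw [Set.indicator_of_mem (by simpa using h)]

/-- For `H ~ Exp(λ_h)`, `Φ_k > 0`, `Φ_Σ ≥ 0`, `c > 0` with `Φ_k > c Φ_Σ`, and every `s > 0`,
`P[H Φ_k / (s H Φ_Σ + 1) < c / s] = 1 − exp(−λ_h c / (s (Φ_k − c Φ_Σ)))`. -/
theorem direct_noma_outage_exact
    {Ω : Type*} [MeasureSpace Ω] [IsProbabilityMeasure (ℙ : Measure Ω)]
    (lamh Phik PhiSum c : ℝ)
    (hlamh : 0 < lamh) (hPhik : 0 < Phik) (hPhiSum : 0 ≤ PhiSum) (hc : 0 < c)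
    (hdom : c * PhiSum < Phik)
    (H : Ω → ℝ) (hHmeas : Measurable H)
    (hHlaw : Measure.map H ℙ = expMeasure lamh)
    (s : ℝ) (hs : 0 < s) :
    ℙ {ω | H ω * Phik / (s * (H ω * PhiSum) + 1) < c / s}
      = ENNReal.ofReal (1 - Real.exp (-(lamh * c) / (s * (Phik - c * PhiSum)))) := by
  set D : ℝ := s * (Phik - c * PhiSum) with hD
  have hDpos : 0 < D := mul_pos hs (by linarith)
  set t : ℝ := c / D with ht
  have htpos : 0 < t := div_pos hc hDpos
  set S : Set ℝ := {x | x * Phik / (s * (x * PhiSum) + 1) < c / s} with hSdef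
  have hSmeas : MeasurableSet S := by
    apply measurableSet_lt
    · exact (measurable_id.mul_const _).div
        (((measurable_id.mul_const _).const_mul _).add_const 1)
    · exact measurable_const
  have hpre : {ω | H ω * Phik / (s * (H ω * PhiSum) + 1) < c / s} = H ⁻¹' S := rfl
  rw [hpre, ← Measure.map_apply hHmeas hSmeas, hHlaw]
  -- key: S ∩ Ioi 0 = Ioo 0 t
  have hkey : S ∩ Set.Ioi (0:ℝ) = Set.Ioo 0 t := by
    ext x
    simp only [Set.mem_inter_iff, Set.mem_setOf_eq, Set.mem_Ioi, Set.mem_Ioo, hSdef]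
    constructor
    · rintro ⟨h1, h2⟩
      refine ⟨h2, ?_⟩
      have hd : 0 < s * (x * PhiSum) + 1 := by positivity
      rw [div_lt_div_iff₀ hd hs] at h1
      rw [ht, lt_div_iff₀ hDpos]
      nlinarith
    · rintro ⟨h2, h1⟩
      refine ⟨?_, h2⟩
      have hd : 0 < s * (x * PhiSum) + 1 := by positivity
      rw [div_lt_div_iff₀ hd hs]
      rw [ht, lt_div_iff₀ hDpos] at h1
      nlinarith
  have hIic : Set.Iic t ∩ Set.Ioi (0:ℝ) = Set.Ioc 0 t := by
    ext x; simp [Set.mem_Ioc, and_comm]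
  have restr : ∀ A : Set ℝ, MeasurableSet A →
      ∫⁻ x in A, exponentialPDF lamh x = ∫⁻ x in A ∩ Set.Ioi 0, exponentialPDF lamh x := by
    intro A hA
    rw [lintegral_congr_ae (Filter.EventuallyEq.restrict (exponentialPDF_ae_indicator lamh)),
      lintegral_indicator measurableSet_Ioi,
      Measure.restrict_restrict measurableSet_Ioi, Set.inter_comm]
  have hOooOoc : ∫⁻ x in Set.Ioo (0:ℝ) t, exponentialPDF lamh x
      = ∫⁻ x in Set.Ioc (0:ℝ) t, exponentialPDF lamh x := by
    refine setLIntegral_congr ?_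
    exact MeasureTheory.Ioo_ae_eq_Ioc
  have hexp : expMeasure lamh S = ∫⁻ x in Set.Iic t, exponentialPDF lamh x := by
    rw [expMeasure_eq_withDensity, withDensity_apply _ hSmeas, restr S hSmeas, hkey, hOooOoc,
      ← hIic, ← restr (Set.Iic t) measurableSet_Iic]
  rw [hexp, lintegral_exponentialPDF_eq_antiDeriv hlamh t, if_pos htpos.le]
  congr 2
  rw [ht]
  field_simp
end

section
/- Let H be exponentially distributed with rate λ_h > 0, let Φ_k > 0, let Φ_Σ ≥ 0, and let c > 0 satisfy Φ_k > c·Φ_Σ. Then lim_{s→∞} s · P[ H·Φ_k / (s·H·Φ_Σ + 1) < c/s ] = λ_h c / (Φ_k − c·Φ_Σ). In particular, the rate outage probability of the direct-NOMA term decays as λ_h c / (s (Φ_k − c·Φ_Σ)) in the high-SNR limit. -/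
open MeasureTheory ProbabilityTheory Real Filter Topology

lemma expMeasure_Iio_eq {r : ℝ} (hr : 0 < r) (t : ℝ) :
    expMeasure r (Set.Iio t)
      = ENNReal.ofReal (if 0 ≤ t then 1 - Real.exp (-(r * t)) else 0) := by
  have h1 : expMeasure r (Set.Iio t) = ∫⁻ x in Set.Iio t, exponentialPDF r x := by
    rw [expMeasure, gammaMeasure, withDensity_apply _ measurableSet_Iio]
    rfl
  have h2 : (∫⁻ x in Set.Iio t, exponentialPDF r x)
      = ∫⁻ x in Set.Iic t, exponentialPDF r x :=
    setLIntegral_congr Iio_ae_eq_Iic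
  rw [h1, h2, lintegral_exponentialPDF_eq_antiDeriv hr]

/-- For `H ~ Exp(λ_h)`, `Φ_k > 0`, `Φ_Σ ≥ 0`, `c > 0` with `Φ_k > c Φ_Σ`,
`lim_{s→∞} s · P[H Φ_k / (s H Φ_Σ + 1) < c / s] = λ_h c / (Φ_k − c Φ_Σ)`:
the direct-NOMA rate outage probability decays as `λ_h c / (s (Φ_k − c Φ_Σ))`
in the high-SNR limit. -/
theorem direct_noma_outage_asymptotic
    {Ω : Type*} [MeasureSpace Ω] [IsProbabilityMeasure (ℙ : Measure Ω)]
    (lamh Phik PhiSum c : ℝ)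
    (hlamh : 0 < lamh) (hPhik : 0 < Phik) (hPhiSum : 0 ≤ PhiSum) (hc : 0 < c)
    (hdom : c * PhiSum < Phik)
    (H : Ω → ℝ) (hHmeas : Measurable H)
    (hHlaw : Measure.map H ℙ = expMeasure lamh) :
    Tendsto (fun s : ℝ =>
        s * (ℙ {ω | H ω * Phik / (s * (H ω * PhiSum) + 1) < c / s}).toReal)
      atTop (𝓝 (lamh * c / (Phik - c * PhiSum))) := by
  set d : ℝ := Phik - c * PhiSum with hd
  have hdpos : 0 < d := by simp only [hd]; linarith
  -- H ≥ 0 a.s.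
  have hHneg : ℙ {ω | H ω < 0} = 0 := by
    have : {ω | H ω < 0} = H ⁻¹' Set.Iio 0 := rfl
    rw [this, ← Measure.map_apply hHmeas measurableSet_Iio, hHlaw,
      expMeasure_Iio_eq hlamh]
    norm_num
  -- probability formula for s > 0
  have key : ∀ s : ℝ, 0 < s →
      (ℙ {ω | H ω * Phik / (s * (H ω * PhiSum) + 1) < c / s}).toReal
        = 1 - Real.exp (-(lamh * (c / (s * d)))) := by
    intro s hs
    have ht : 0 < c / (s * d) := div_pos hc (mul_pos hs hdpos)
    have hset : ℙ {ω | H ω * Phik / (s * (H ω * PhiSum) + 1) < c / s}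
        = ℙ {ω | H ω < c / (s * d)} := by
      apply measure_congr
      have : ∀ᵐ ω ∂ℙ, 0 ≤ H ω := by
        rw [ae_iff]
        convert hHneg using 2
        ext ω; simp
      filter_upwards [this] with ω hω
      have hD : 0 < s * (H ω * PhiSum) + 1 := by positivity
      show (H ω * Phik / (s * (H ω * PhiSum) + 1) < c / s) = (H ω < c / (s * d))
      rw [eq_iff_iff, div_lt_div_iff₀ hD hs, lt_div_iff₀ (mul_pos hs hdpos)]
      constructor <;> intro h <;> nlinarith
    rw [hset]
    have : {ω | H ω < c / (s * d)} = H ⁻¹' Set.Iio (c / (s * d)) := rfl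
    rw [this, ← Measure.map_apply hHmeas measurableSet_Iio, hHlaw,
      expMeasure_Iio_eq hlamh, if_pos ht.le, ENNReal.toReal_ofReal]
    have : Real.exp (-(lamh * (c / (s * d)))) ≤ 1 := by
      rw [Real.exp_le_one_iff]
      nlinarith [div_pos hc (mul_pos hs hdpos)]
    linarith
  -- the limit
  set a : ℝ := lamh * c / d with ha
  have hF : HasDerivAt (fun u : ℝ => 1 - Real.exp (-(a * u))) a 0 := by
    have h1 : HasDerivAt (fun u : ℝ => Real.exp (-(a * u))) (-a) 0 := by
      have := ((hasDerivAt_id (0:ℝ)).const_mul (-a)).exp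
      simpa [mul_comm] using this
    simpa using h1.const_sub (1:ℝ)
  have hslope := hasDerivAt_iff_tendsto_slope.mp hF
  have hinv : Tendsto (fun s : ℝ => s⁻¹) atTop (𝓝[≠] (0:ℝ)) := by
    apply tendsto_nhdsWithin_of_tendsto_nhds_of_eventually_within _ tendsto_inv_atTop_zero
    filter_upwards [eventually_gt_atTop 0] with s hs
    simp [ne_of_gt (inv_pos.mpr hs)]
  have hcomp := hslope.comp hinv
  have hfinal : Tendsto (fun s : ℝ =>
      s * (ℙ {ω | H ω * Phik / (s * (H ω * PhiSum) + 1) < c / s}).toReal)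
      atTop (𝓝 a) := by
    apply hcomp.congr'
    filter_upwards [eventually_gt_atTop 0] with s hs
    have hs' : s ≠ 0 := ne_of_gt hs
    simp only [Function.comp_apply, slope_def_field]
    rw [key s hs]
    have harg : a * s⁻¹ = lamh * (c / (s * d)) := by
      field_simp [ha]
      rw [ha, div_mul_cancel₀ _ hdpos.ne']
    rw [harg]
    field_simp
    simp only [mul_zero, neg_zero, Real.exp_zero]
    ring
  exact hfinal
end

section
/- Let C and D be independent, each exponentially distributed with rate λ_g > 0, and let 0 < ε_1 ≤ 1. Then the random variable ν = (C + ε_1 D)² / (C + D) has expectation E[ν] = 2(1 + ε_1 + ε_1²) / (3 λ_g). -/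
open MeasureTheory ProbabilityTheory Real

section Aux
open Set
open scoped ENNReal

private lemma shift_lint (d : ℝ) (F : ℝ → ℝ≥0∞) :
    ∫⁻ c in Set.Ioi (0:ℝ), F (c + d) = ∫⁻ s in Set.Ioi d, F s := by
  rw [← lintegral_indicator measurableSet_Ioi, ← lintegral_indicator measurableSet_Ioi]
  have h : ∀ c, (Set.Ioi (0:ℝ)).indicator (fun c => F (c + d)) c
      = (Set.Ioi d).indicator F (c + d) := by
    intro c
    by_cases hc : c ∈ Set.Ioi (0:ℝ)
    · rw [Set.indicator_of_mem hc, Set.indicator_of_mem (by simpa using hc)]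
    · rw [Set.indicator_of_notMem hc, Set.indicator_of_notMem (by simpa using hc)]
  simp_rw [h]
  exact lintegral_add_right_eq_self (fun s => (Set.Ioi d).indicator F s) d

private lemma swap_lint (H : ℝ → ℝ → ℝ≥0∞) (hH : Measurable (Function.uncurry H)) :
    ∫⁻ d in Set.Ioi (0:ℝ), ∫⁻ s in Set.Ioi d, H d s
      = ∫⁻ s in Set.Ioi (0:ℝ), ∫⁻ d in Set.Ioo 0 s, H d s := by
  have hT : MeasurableSet {p : ℝ × ℝ | 0 < p.1 ∧ p.1 < p.2} :=
    (measurableSet_lt measurable_const measurable_fst).inter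
      (measurableSet_lt measurable_fst measurable_snd)
  set f : ℝ × ℝ → ℝ≥0∞ :=
    fun p => if 0 < p.1 ∧ p.1 < p.2 then H p.1 p.2 else 0 with hfdef
  have hf : Measurable f := Measurable.ite hT (hH.comp measurable_id) measurable_const
  have e1 : ∀ d : ℝ, (∫⁻ s, f (d, s))
      = Set.indicator (Set.Ioi (0:ℝ)) (fun d => ∫⁻ s in Set.Ioi d, H d s) d := by
    intro d
    by_cases hd : d ∈ Set.Ioi (0:ℝ)
    · rw [Set.indicator_of_mem hd, ← lintegral_indicator measurableSet_Ioi]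
      refine lintegral_congr fun s => ?_
      by_cases hs : s ∈ Set.Ioi d
      · rw [Set.indicator_of_mem hs, hfdef]
        exact if_pos ⟨hd, hs⟩
      · rw [Set.indicator_of_notMem hs, hfdef]
        exact if_neg (fun h => hs h.2)
    · rw [Set.indicator_of_notMem hd]
      have h0 : ∀ s : ℝ, f (d, s) = 0 := fun s => if_neg (fun h => hd h.1)
      simp only [h0, lintegral_zero]
  have e2 : ∀ s : ℝ, (∫⁻ d, f (d, s))
      = Set.indicator (Set.Ioi (0:ℝ)) (fun s => ∫⁻ d in Set.Ioo 0 s, H d s) s := by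
    intro s
    by_cases hs : s ∈ Set.Ioi (0:ℝ)
    · rw [Set.indicator_of_mem hs, ← lintegral_indicator measurableSet_Ioo]
      refine lintegral_congr fun d => ?_
      by_cases hd : d ∈ Set.Ioo (0:ℝ) s
      · rw [Set.indicator_of_mem hd, hfdef]
        exact if_pos ⟨hd.1, hd.2⟩
      · rw [Set.indicator_of_notMem hd, hfdef]
        exact if_neg (fun h => hd ⟨h.1, h.2⟩)
    · rw [Set.indicator_of_notMem hs]
      have h0 : ∀ d : ℝ, f (d, s) = 0 :=
        fun d => if_neg (fun h => hs (lt_trans h.1 h.2))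
      simp only [h0, lintegral_zero]
  calc ∫⁻ d in Set.Ioi (0:ℝ), ∫⁻ s in Set.Ioi d, H d s
      = ∫⁻ d, Set.indicator (Set.Ioi (0:ℝ)) (fun d => ∫⁻ s in Set.Ioi d, H d s) d :=
        (lintegral_indicator measurableSet_Ioi _).symm
    _ = ∫⁻ d, ∫⁻ s, f (d, s) := by simp_rw [e1]
    _ = ∫⁻ p, f p ∂((volume : Measure ℝ).prod volume) := (lintegral_prod f hf.aemeasurable).symm
    _ = ∫⁻ s, ∫⁻ d, f (d, s) := lintegral_prod_symm f hf.aemeasurable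
    _ = ∫⁻ s, Set.indicator (Set.Ioi (0:ℝ)) (fun s => ∫⁻ d in Set.Ioo 0 s, H d s) s := by
        simp_rw [e2]
    _ = ∫⁻ s in Set.Ioi (0:ℝ), ∫⁻ d in Set.Ioo 0 s, H d s :=
        lintegral_indicator measurableSet_Ioi _

private lemma poly_int (a s : ℝ) : ∫ d in (0:ℝ)..s, (s - a*d)^2 = s^3 - a*s^3 + a^2*s^3/3 := by
  have h : ∀ d:ℝ, (s - a*d)^2 = s^2 - (2*a*s)*d + a^2*d^2 := fun d => by ring
  simp_rw [h]
  have i1 : IntervalIntegrable (fun _ : ℝ => s^2) volume 0 s := intervalIntegrable_const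
  have i2 : IntervalIntegrable (fun d : ℝ => (2*a*s)*d) volume 0 s :=
    (intervalIntegral.intervalIntegrable_id).const_mul _
  have i3 : IntervalIntegrable (fun d : ℝ => a^2*d^2) volume 0 s :=
    (intervalIntegral.intervalIntegrable_pow 2).const_mul _
  rw [intervalIntegral.integral_add (i1.sub i2) i3, intervalIntegral.integral_sub i1 i2,
    intervalIntegral.integral_const, intervalIntegral.integral_const_mul,
    intervalIntegral.integral_const_mul, integral_id, integral_pow]
  simp only [smul_eq_mul]
  ring

private lemma gamma_int (r : ℝ) (hr : 0 < r) :
    ∫ t : ℝ in Ioi 0, t ^ 2 * Real.exp (-(r * t)) = 2 / r ^ 3 := by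
  have h := integral_rpow_mul_exp_neg_mul_Ioi (a := 3) (r := r) (by norm_num) hr
  have h3 : Real.Gamma 3 = 2 := by
    rw [(by norm_num : (3:ℝ) = (2:ℕ)+1), Real.Gamma_nat_eq_factorial]; norm_num
  rw [h3] at h
  rw [show ∫ t : ℝ in Ioi 0, t ^ 2 * Real.exp (-(r * t))
      = ∫ t : ℝ in Ioi 0, t ^ ((3:ℝ)-1) * Real.exp (-(r * t)) from by
    refine setIntegral_congr_fun measurableSet_Ioi fun t ht => ?_
    rw [show (3:ℝ)-1 = ((2:ℕ):ℝ) by norm_num, Real.rpow_natCast], h]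
  rw [show (3:ℝ) = ((3:ℕ):ℝ) by norm_num, Real.rpow_natCast, div_pow, one_pow]
  ring

private lemma sq_exp_integrable (r : ℝ) (hr : 0 < r) :
    IntegrableOn (fun s : ℝ => s^2 * Real.exp (-(r*s))) (Ioi 0) := by
  have h := integrableOn_rpow_mul_exp_neg_mul_rpow
    (s := 2) (p := 1) (b := r) (by norm_num) one_pos hr
  refine (integrable_congr ?_).mp h
  refine (ae_restrict_iff' measurableSet_Ioi).mpr (ae_of_all _ fun x hx => ?_)
  simp only
  rw [show x ^ (2:ℝ) = x ^ (2:ℕ) from by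
        rw [show (2:ℝ) = ((2:ℕ):ℝ) by norm_num, Real.rpow_natCast],
      Real.rpow_one, neg_mul]

private lemma key_calc (r e : ℝ) (hr : 0 < r) (he : 0 < e) (he' : e ≤ 1) :
    ∫⁻ d in Set.Ioi (0:ℝ), ∫⁻ c in Set.Ioi (0:ℝ),
      ENNReal.ofReal ((r * Real.exp (-(r*d))) *
        ((r * Real.exp (-(r*c))) * ((c + e*d)^2/(c+d))))
      = ENNReal.ofReal (2*(1+e+e^2)/(3*r)) := by
  set h : ℝ → ℝ → ℝ := fun d s => r^2 * Real.exp (-(r*s)) * ((s - (1-e)*d)^2 / s) with hh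
  have step1 : ∀ d ∈ Set.Ioi (0:ℝ),
      (∫⁻ c in Set.Ioi (0:ℝ), ENNReal.ofReal ((r * Real.exp (-(r*d))) *
        ((r * Real.exp (-(r*c))) * ((c + e*d)^2/(c+d)))))
      = ∫⁻ s in Set.Ioi d, ENNReal.ofReal (h d s) := by
    intro d _
    have hc : ∀ c : ℝ, (r * Real.exp (-(r*d))) *
        ((r * Real.exp (-(r*c))) * ((c + e*d)^2/(c+d))) = h d (c + d) := by
      intro c
      simp only [hh]
      rw [show (-(r*(c+d))) = -(r*c) + -(r*d) from by ring, Real.exp_add]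
      ring
    simp_rw [hc]
    exact shift_lint d (fun s => ENNReal.ofReal (h d s))
  rw [setLIntegral_congr_fun measurableSet_Ioi step1]
  have hmeas : Measurable (Function.uncurry (fun d s => ENNReal.ofReal (h d s))) := by
    apply Measurable.ennreal_ofReal
    simp only [hh, Function.uncurry]
    fun_prop
  rw [swap_lint _ hmeas]
  have step2 : ∀ s ∈ Set.Ioi (0:ℝ),
      (∫⁻ d in Set.Ioo (0:ℝ) s, ENNReal.ofReal (h d s))
      = ENNReal.ofReal ((1+e+e^2)/3 * (r^2 * (s^2 * Real.exp (-(r*s))))) := by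
    intro s hs
    have hs0 : (0:ℝ) < s := hs
    have hrw : ∀ d : ℝ, h d s = (r^2 * Real.exp (-(r*s)) / s) * (s - (1-e)*d)^2 := by
      intro d; simp only [hh]; ring
    simp_rw [hrw]
    have hcont : Continuous (fun d : ℝ => (r^2 * Real.exp (-(r*s)) / s) * (s - (1-e)*d)^2) := by
      fun_prop
    have hint : IntegrableOn (fun d : ℝ => (r^2 * Real.exp (-(r*s)) / s) * (s - (1-e)*d)^2)
        (Ioo 0 s) := (hcont.integrableOn_Icc (a := 0) (b := s)).mono_set Ioo_subset_Icc_self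
    rw [← ofReal_integral_eq_lintegral_ofReal hint (ae_of_all _ fun d => by positivity)]
    congr 1
    rw [← integral_Ioc_eq_integral_Ioo, ← intervalIntegral.integral_of_le hs0.le,
      intervalIntegral.integral_const_mul, poly_int]
    field_simp
    ring
  rw [setLIntegral_congr_fun measurableSet_Ioi step2]
  have hint2 : IntegrableOn
      (fun s : ℝ => (1+e+e^2)/3 * (r^2 * (s^2 * Real.exp (-(r*s))))) (Ioi 0) := by
    have := ((sq_exp_integrable r hr).const_mul (r^2)).const_mul ((1+e+e^2)/3)
    exact this
  rw [← ofReal_integral_eq_lintegral_ofReal hint2 (ae_of_all _ fun s => by positivity)]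
  congr 1
  rw [MeasureTheory.integral_const_mul, MeasureTheory.integral_const_mul, gamma_int r hr]
  field_simp

private lemma exp_restrict (r : ℝ) (f : ℝ → ℝ≥0∞) :
    ∫⁻ x, exponentialPDF r x * f x = ∫⁻ x in Set.Ioi (0:ℝ), exponentialPDF r x * f x := by
  rw [← lintegral_add_compl (fun x => exponentialPDF r x * f x) (measurableSet_Iio (a := (0:ℝ)))]
  have h1 : ∫⁻ x in Iio (0:ℝ), exponentialPDF r x * f x = 0 := by
    rw [setLIntegral_congr_fun measurableSet_Iio
      (fun ⦃x⦄ (hx : x < 0) => by rw [exponentialPDF_of_neg hx, zero_mul])]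
    exact lintegral_zero
  rw [h1, zero_add, compl_Iio, ← MeasureTheory.restrict_Ioi_eq_restrict_Ici]

end Aux

open Set in

/-- If `C, D` are independent `Exp(λ_g)` random variables and `0 < ε_1 ≤ 1`, then
`ν = (C + ε_1 D)²/(C + D)` has expectation `2(1 + ε_1 + ε_1²)/(3 λ_g)`. -/
theorem timing_offset_effective_power_mean
    {Ω : Type*} [MeasureSpace Ω] [IsProbabilityMeasure (ℙ : Measure Ω)]
    (lamg : ℝ) (hlamg : 0 < lamg)
    (eps1 : ℝ) (heps1 : 0 < eps1) (heps1' : eps1 ≤ 1)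
    (C D : Ω → ℝ) (hC : Measurable C) (hD : Measurable D)
    (hindep : IndepFun C D ℙ)
    (hClaw : Measure.map C ℙ = expMeasure lamg)
    (hDlaw : Measure.map D ℙ = expMeasure lamg) :
    ∫ ω, (C ω + eps1 * D ω) ^ 2 / (C ω + D ω) ∂ℙ
      = 2 * (1 + eps1 + eps1 ^ 2) / (3 * lamg) := by
  have hμprob : IsProbabilityMeasure (expMeasure lamg) :=
    isProbabilityMeasure_expMeasure hlamg
  have hexp : expMeasure lamg = volume.withDensity (exponentialPDF lamg) := rfl
  have hpdfm : Measurable (exponentialPDF lamg) :=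
    (measurable_exponentialPDFReal lamg).ennreal_ofReal
  have hφm : Measurable (fun p : ℝ × ℝ => (p.1 + eps1 * p.2) ^ 2 / (p.1 + p.2)) := by fun_prop
  have hfm : Measurable (fun ω => (C ω + eps1 * D ω) ^ 2 / (C ω + D ω)) := by fun_prop
  -- a.s. nonnegativity
  have law_nn : ∀ (X : Ω → ℝ), Measurable X → Measure.map X ℙ = expMeasure lamg →
      ∀ᵐ ω ∂ℙ, 0 ≤ X ω := by
    intro X hX hXlaw
    have h0 : ℙ (X ⁻¹' Iio 0) = 0 := by
      rw [← Measure.map_apply hX measurableSet_Iio, hXlaw, hexp,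
        withDensity_apply _ measurableSet_Iio]
      exact lintegral_exponentialPDF_of_nonpos le_rfl
    rw [ae_iff]
    simp only [not_le]; exact h0
  have hCnn := law_nn C hC hClaw
  have hDnn := law_nn D hD hDlaw
  have hnn : 0 ≤ᵐ[ℙ] fun ω => (C ω + eps1 * D ω) ^ 2 / (C ω + D ω) := by
    filter_upwards [hCnn, hDnn] with ω h1 h2
    exact div_nonneg (sq_nonneg _) (by linarith)
  rw [integral_eq_lintegral_of_nonneg_ae hnn hfm.aestronglyMeasurable]
  suffices hsuff : ∫⁻ ω, ENNReal.ofReal ((C ω + eps1 * D ω) ^ 2 / (C ω + D ω)) ∂ℙ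
      = ENNReal.ofReal (2 * (1 + eps1 + eps1 ^ 2) / (3 * lamg)) by
    rw [hsuff, ENNReal.toReal_ofReal (by positivity)]
  have hmap : Measure.map (fun ω => (C ω, D ω)) ℙ
      = (expMeasure lamg).prod (expMeasure lamg) := by
    rw [(indepFun_iff_map_prod_eq_prod_map_map hC.aemeasurable hD.aemeasurable).mp hindep,
      hClaw, hDlaw]
  have h1 : ∫⁻ ω, ENNReal.ofReal ((C ω + eps1 * D ω) ^ 2 / (C ω + D ω)) ∂ℙ
      = ∫⁻ p, ENNReal.ofReal ((p.1 + eps1 * p.2) ^ 2 / (p.1 + p.2))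
          ∂((expMeasure lamg).prod (expMeasure lamg)) := by
    rw [← hmap, lintegral_map hφm.ennreal_ofReal (hC.prodMk hD)]
  rw [h1, lintegral_prod_symm _ hφm.ennreal_ofReal.aemeasurable]
  -- inner integral transformation
  have inner : ∀ d : ℝ, (∫⁻ c, ENNReal.ofReal ((c + eps1 * d) ^ 2 / (c + d)) ∂(expMeasure lamg))
      = ∫⁻ c in Set.Ioi (0:ℝ),
          ENNReal.ofReal ((lamg * Real.exp (-(lamg * c))) * ((c + eps1 * d) ^ 2 / (c + d))) := by
    intro d
    have hcm : Measurable (fun c : ℝ => ENNReal.ofReal ((c + eps1 * d) ^ 2 / (c + d))) := by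
      apply Measurable.ennreal_ofReal; fun_prop
    rw [hexp, lintegral_withDensity_eq_lintegral_mul volume hpdfm hcm]
    rw [show (fun a => (exponentialPDF lamg * fun c => ENNReal.ofReal ((c + eps1 * d) ^ 2 / (c + d))) a)
        = fun c => exponentialPDF lamg c * ENNReal.ofReal ((c + eps1 * d) ^ 2 / (c + d)) from rfl]
    rw [exp_restrict]
    refine setLIntegral_congr_fun measurableSet_Ioi (fun ⦃c⦄ hc => ?_)
    rw [exponentialPDF_of_nonneg (le_of_lt hc), ← ENNReal.ofReal_mul (by positivity)]
  rw [lintegral_congr fun d => inner d]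
  -- outer integral transformation
  have hGm : Measurable (fun d : ℝ => ∫⁻ c in Set.Ioi (0:ℝ),
      ENNReal.ofReal ((lamg * Real.exp (-(lamg * c))) * ((c + eps1 * d) ^ 2 / (c + d)))) := by
    have h2 : Measurable (fun p : ℝ × ℝ => ENNReal.ofReal
        ((lamg * Real.exp (-(lamg * p.1))) * ((p.1 + eps1 * p.2) ^ 2 / (p.1 + p.2)))) := by
      apply Measurable.ennreal_ofReal; fun_prop
    exact Measurable.lintegral_prod_left (f := fun c d => ENNReal.ofReal
      ((lamg * Real.exp (-(lamg * c))) * ((c + eps1 * d) ^ 2 / (c + d)))) h2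
  rw [hexp, lintegral_withDensity_eq_lintegral_mul volume hpdfm hGm]
  rw [show (fun a => (exponentialPDF lamg * fun d => ∫⁻ c in Set.Ioi (0:ℝ),
      ENNReal.ofReal ((lamg * Real.exp (-(lamg * c))) * ((c + eps1 * d) ^ 2 / (c + d)))) a)
      = fun d => exponentialPDF lamg d * ∫⁻ c in Set.Ioi (0:ℝ),
      ENNReal.ofReal ((lamg * Real.exp (-(lamg * c))) * ((c + eps1 * d) ^ 2 / (c + d))) from rfl]
  rw [exp_restrict]
  rw [setLIntegral_congr_fun measurableSet_Ioi (fun ⦃d⦄ (hd : (0:ℝ) < d) => ?_), 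
    key_calc lamg eps1 hlamg heps1 heps1']
  rw [exponentialPDF_of_nonneg (le_of_lt hd), ← lintegral_const_mul _ (by
    apply Measurable.ennreal_ofReal; fun_prop)]
  refine setLIntegral_congr_fun measurableSet_Ioi (fun ⦃c⦄ hc => ?_)
  rw [← ENNReal.ofReal_mul (by positivity)]
end

section
/- Let C and D be independent, each exponentially distributed with rate λ_g > 0, and let 0 < ε_1 ≤ 1. Then the random variable ν = (C + ε_1 D)² / (C + D) has variance Var[ν] = 2(17 + 7ε_1 − 3ε_1² + 7ε_1³ + 17ε_1⁴) / (45 λ_g²). -/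
set_option maxHeartbeats 1000000

open MeasureTheory ProbabilityTheory Real

section AuxTimingOffset
open Set ENNReal Nat intervalIntegral

lemma poly_int_sq (eps s : ℝ) :
    ∫ c in (0:ℝ)..s, (c + eps * (s - c)) ^ 2
      = (1 + eps + eps ^ 2) / 3 * s ^ 3 := by
  have h := integral_eq_sub_of_hasDerivAt
    (f := fun c : ℝ => eps^2*s^2*c + eps*s*(1-eps)*c^2 + (1-eps)^2/3*c^3)
    (f' := fun c : ℝ => (c + eps * (s - c)) ^ 2) (a := 0) (b := s)
    (fun x _ => by
      have h1 : HasDerivAt (fun c : ℝ => eps^2*s^2*c + eps*s*(1-eps)*c^2 + (1-eps)^2/3*c^3)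
          (eps^2*s^2*1 + eps*s*(1-eps)*(2*x^1) + (1-eps)^2/3*(3*x^2)) x :=
        (((hasDerivAt_id x).const_mul _).add
          (((hasDerivAt_pow 2 x).const_mul _))).add ((hasDerivAt_pow 3 x).const_mul _)
      refine h1.congr_deriv ?_
      ring)
    (Continuous.intervalIntegrable (by continuity) _ _)
  rw [h]; ring

lemma poly_int_qu (eps s : ℝ) :
    ∫ c in (0:ℝ)..s, (c + eps * (s - c)) ^ 4
      = (1 + eps + eps ^ 2 + eps ^ 3 + eps ^ 4) / 5 * s ^ 5 := by
  have h := integral_eq_sub_of_hasDerivAt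
    (f := fun c : ℝ => eps^4*s^4*c + 2*eps^3*s^3*(1-eps)*c^2 + 2*eps^2*s^2*(1-eps)^2*c^3
      + eps*s*(1-eps)^3*c^4 + (1-eps)^4/5*c^5)
    (f' := fun c : ℝ => (c + eps * (s - c)) ^ 4) (a := 0) (b := s)
    (fun x _ => by
      have h1 : HasDerivAt (fun c : ℝ => eps^4*s^4*c + 2*eps^3*s^3*(1-eps)*c^2
            + 2*eps^2*s^2*(1-eps)^2*c^3 + eps*s*(1-eps)^3*c^4 + (1-eps)^4/5*c^5)
          (eps^4*s^4*1 + 2*eps^3*s^3*(1-eps)*(2*x^1) + 2*eps^2*s^2*(1-eps)^2*(3*x^2)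
            + eps*s*(1-eps)^3*(4*x^3) + (1-eps)^4/5*(5*x^4)) x :=
        (((((hasDerivAt_id x).const_mul _).add
          ((hasDerivAt_pow 2 x).const_mul _)).add ((hasDerivAt_pow 3 x).const_mul _)).add
          ((hasDerivAt_pow 4 x).const_mul _)).add ((hasDerivAt_pow 5 x).const_mul _)
      refine h1.congr_deriv ?_
      ring)
    (Continuous.intervalIntegrable (by continuity) _ _)
  rw [h]; ring

lemma lint_expMeasure (r : ℝ) (g : ℝ → ℝ≥0∞) (hg : Measurable g) :
    ∫⁻ x, g x ∂(expMeasure r)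
      = ∫⁻ x in Ioi 0, ENNReal.ofReal (r * exp (-(r * x))) * g x := by
  have hm : Measurable (exponentialPDF r) := (measurable_exponentialPDFReal r).ennreal_ofReal
  have : expMeasure r = volume.withDensity (exponentialPDF r) := rfl
  rw [this, lintegral_withDensity_eq_lintegral_mul _ hm hg]
  rw [← lintegral_add_compl (f := fun x => (exponentialPDF r * g) x)
    (measurableSet_Ici (a := (0:ℝ)))]
  have h2 : ∫⁻ x in (Ici (0:ℝ))ᶜ, (exponentialPDF r * g) x = 0 := by
    simp only [Pi.mul_apply]
    rw [lintegral_eq_zero_iff (f := fun x => exponentialPDF r x * g x) (hm.mul hg)]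
    filter_upwards [ae_restrict_mem (measurableSet_Ici (a := (0:ℝ))).compl] with x hx
    have hx0 : x < 0 := by simpa using hx
    simp [exponentialPDF_of_neg hx0]
  rw [h2, add_zero, ← setLIntegral_congr (Ioi_ae_eq_Ici (a := (0:ℝ)))]
  refine setLIntegral_congr_fun measurableSet_Ioi (fun x hx => ?_)
  simp [Pi.mul_apply, exponentialPDF_of_nonneg (le_of_lt hx)]

lemma gamma_int_on (r : ℝ) (hr : 0 < r) (n : ℕ) :
    IntegrableOn (fun s : ℝ => s ^ n * exp (-(r * s))) (Ioi 0) := by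
  have h := integrableOn_rpow_mul_exp_neg_mul_rpow (s := (n:ℝ)) (p := 1) (b := r)
    (lt_of_lt_of_le neg_one_lt_zero (Nat.cast_nonneg n)) zero_lt_one hr
  refine h.congr_fun (fun x hx => ?_) measurableSet_Ioi
  dsimp only
  rw [Real.rpow_natCast, Real.rpow_one]
  ring_nf

lemma gamma_int_val (r : ℝ) (hr : 0 < r) (n : ℕ) :
    ∫ s in Ioi 0, s ^ n * exp (-(r * s)) = (n ! : ℝ) / r ^ (n + 1) := by
  have h := Real.integral_rpow_mul_exp_neg_mul_Ioi (a := (n:ℝ) + 1) (r := r)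
    (by positivity) hr
  rw [show ((n:ℝ) + 1 - 1) = (n:ℝ) by ring] at h
  rw [show (∫ s in Ioi 0, s ^ n * exp (-(r * s)))
      = ∫ s in Ioi (0:ℝ), s ^ ((n:ℝ)) * exp (-(r * s)) from
    setIntegral_congr_fun measurableSet_Ioi (fun x hx => by
      rw [Real.rpow_natCast]), h]
  rw [show ((n:ℝ) + 1) = ((n + 1 : ℕ) : ℝ) by push_cast; ring]
  rw [Real.rpow_natCast]
  push_cast
  rw [Real.Gamma_nat_eq_factorial]
  rw [div_pow, one_pow]
  ring

lemma master (lamg eps : ℝ) (hl : 0 < lamg) (he : 0 < eps) (n k : ℕ) (A : ℝ) (hA : 0 ≤ A)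
    (hpoly : ∀ s : ℝ, 0 < s →
      ∫ c in (0:ℝ)..s, (c + eps * (s - c)) ^ (n + k) = A * s ^ (n + k + 1)) :
    ∫⁻ p : ℝ × ℝ, ENNReal.ofReal ((p.1 + eps * p.2) ^ (n + k) / (p.1 + p.2) ^ n)
        ∂((expMeasure lamg).prod (expMeasure lamg))
      = ENNReal.ofReal (A * ((k + 1)! : ℝ) / lamg ^ k) := by
  haveI : IsProbabilityMeasure (expMeasure lamg) := isProbabilityMeasure_expMeasure hl
  set G : ℝ → ℝ → ℝ := fun c s =>
    (lamg * exp (-(lamg * c))) * (lamg * exp (-(lamg * (s - c))))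
      * ((c + eps * (s - c)) ^ (n + k) / s ^ n) with hG
  have hFm : Measurable (fun p : ℝ × ℝ =>
      ENNReal.ofReal ((p.1 + eps * p.2) ^ (n + k) / (p.1 + p.2) ^ n)) := by
    fun_prop
  -- Step 1: Tonelli
  rw [lintegral_prod _ hFm.aemeasurable]
  -- Step 2: densities
  have hinner : ∀ c : ℝ,
      (∫⁻ d, ENNReal.ofReal ((c + eps * d) ^ (n + k) / (c + d) ^ n) ∂(expMeasure lamg))
        = ∫⁻ d in Ioi 0, ENNReal.ofReal (lamg * exp (-(lamg * d))) *
            ENNReal.ofReal ((c + eps * d) ^ (n + k) / (c + d) ^ n) := by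
    intro c
    exact lint_expMeasure lamg _ (by fun_prop)
  simp_rw [hinner]
  rw [lint_expMeasure lamg _ (by
    apply Measurable.lintegral_prod_right (f := fun c d =>
      ENNReal.ofReal (lamg * exp (-(lamg * d))) *
        ENNReal.ofReal ((c + eps * d) ^ (n + k) / (c + d) ^ n))
    fun_prop)]
  -- Step 3: translate inner integral
  have hstep3 : ∀ c ∈ Ioi (0:ℝ),
      ENNReal.ofReal (lamg * exp (-(lamg * c))) *
        ∫⁻ d in Ioi 0, ENNReal.ofReal (lamg * exp (-(lamg * d))) *
          ENNReal.ofReal ((c + eps * d) ^ (n + k) / (c + d) ^ n)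
      = ∫⁻ s in Ioi c, ENNReal.ofReal (G c s) := by
    intro c _
    have htr := (measurePreserving_sub_right volume c).setLIntegral_comp_emb
      (MeasurableEquiv.subRight c).measurableEmbedding
      (fun d => ENNReal.ofReal (lamg * exp (-(lamg * d))) *
        ENNReal.ofReal ((c + eps * d) ^ (n + k) / (c + d) ^ n)) (Ioi c)
    rw [show (fun x : ℝ => x - c) '' Ioi c = Ioi 0 by rw [image_sub_const_Ioi]; simp] at htr
    rw [← htr, ← lintegral_const_mul' _ _ ofReal_ne_top]
    refine setLIntegral_congr_fun measurableSet_Ioi (fun s hs => ?_)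
    show ENNReal.ofReal (lamg * exp (-(lamg * c))) *
        ((fun d => ENNReal.ofReal (lamg * exp (-(lamg * d))) *
          ENNReal.ofReal ((c + eps * d) ^ (n + k) / (c + d) ^ n)) (s - c))
        = ENNReal.ofReal (G c s)
    show ENNReal.ofReal (lamg * exp (-(lamg * c))) *
        (ENNReal.ofReal (lamg * exp (-(lamg * (s - c)))) *
          ENNReal.ofReal ((c + eps * (s - c)) ^ (n + k) / (c + (s - c)) ^ n))
        = ENNReal.ofReal (G c s)
    rw [← ENNReal.ofReal_mul (by positivity), ← ENNReal.ofReal_mul (by positivity)]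
    congr 1
    simp only [hG]
    rw [show c + (s - c) = s from by ring]
    ring
  rw [setLIntegral_congr_fun measurableSet_Ioi hstep3]
  -- Step 4: swap order of integration
  have hGm : Measurable (fun p : ℝ × ℝ => ENNReal.ofReal (G p.1 p.2)) := by
    simp only [hG]; fun_prop
  set T : Set (ℝ × ℝ) := {p | 0 < p.1} ∩ {p | p.1 < p.2} with hT
  have hTm : MeasurableSet T :=
    (measurable_fst measurableSet_Ioi).inter (measurableSet_lt measurable_fst measurable_snd)
  set H : ℝ → ℝ → ℝ≥0∞ := fun c s => T.indicator (fun p => ENNReal.ofReal (G p.1 p.2)) (c, s)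
    with hH
  have hHm : Measurable (Function.uncurry H) := hGm.indicator hTm
  have hcl1 : ∀ c : ℝ, ∫⁻ s, H c s
      = (Ioi (0:ℝ)).indicator (fun c => ∫⁻ s in Ioi c, ENNReal.ofReal (G c s)) c := by
    intro c
    by_cases hc : 0 < c
    · rw [indicator_of_mem (mem_Ioi.mpr hc), ← lintegral_indicator measurableSet_Ioi]
      refine lintegral_congr fun s => ?_
      simp [hH, hT, indicator_apply, mem_Ioi, mem_inter_iff, mem_setOf_eq, hc]
    · rw [indicator_of_notMem (by simpa using hc)]
      have hz : ∀ s : ℝ, H c s = 0 := fun s =>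
        indicator_of_notMem (fun hmem => hc hmem.1) _
      simp [hz]
  have hcl2 : ∀ s : ℝ, ∫⁻ c, H c s
      = (Ioi (0:ℝ)).indicator (fun s => ∫⁻ c in Ioo 0 s, ENNReal.ofReal (G c s)) s := by
    intro s
    by_cases hs : 0 < s
    · rw [indicator_of_mem (mem_Ioi.mpr hs), ← lintegral_indicator measurableSet_Ioo]
      refine lintegral_congr fun c => ?_
      simp [hH, hT, indicator_apply, mem_Ioo, mem_inter_iff, mem_setOf_eq, and_assoc]
    · rw [indicator_of_notMem (by simpa using hs)]
      have hz : ∀ c : ℝ, H c s = 0 := fun c =>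
        indicator_of_notMem (fun hmem => hs (lt_trans hmem.1 hmem.2)) _
      simp [hz]
  have hswap : ∫⁻ c in Ioi 0, ∫⁻ s in Ioi c, ENNReal.ofReal (G c s)
      = ∫⁻ s in Ioi 0, ∫⁻ c in Ioo 0 s, ENNReal.ofReal (G c s) := by
    calc ∫⁻ c in Ioi 0, ∫⁻ s in Ioi c, ENNReal.ofReal (G c s)
        = ∫⁻ c, (Ioi (0:ℝ)).indicator
            (fun c => ∫⁻ s in Ioi c, ENNReal.ofReal (G c s)) c := by
          rw [lintegral_indicator measurableSet_Ioi]
      _ = ∫⁻ c, ∫⁻ s, H c s := by simp_rw [hcl1]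
      _ = ∫⁻ s, ∫⁻ c, H c s := lintegral_lintegral_swap hHm.aemeasurable
      _ = ∫⁻ s, (Ioi (0:ℝ)).indicator
            (fun s => ∫⁻ c in Ioo 0 s, ENNReal.ofReal (G c s)) s := by simp_rw [hcl2]
      _ = ∫⁻ s in Ioi 0, ∫⁻ c in Ioo 0 s, ENNReal.ofReal (G c s) :=
          lintegral_indicator measurableSet_Ioi _
  rw [hswap]
  -- Step 5: compute the inner polynomial integral
  have hstep5 : ∀ s ∈ Ioi (0:ℝ), ∫⁻ c in Ioo 0 s, ENNReal.ofReal (G c s)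
      = ENNReal.ofReal (A * lamg ^ 2 * (s ^ (k + 1) * exp (-(lamg * s)))) := by
    intro s hs
    have hsp : 0 < s := hs
    have hcong : ∀ c ∈ Ioo (0:ℝ) s, ENNReal.ofReal (G c s)
        = ENNReal.ofReal ((lamg ^ 2 * exp (-(lamg * s)) / s ^ n)
            * (c + eps * (s - c)) ^ (n + k)) := by
      intro c _
      congr 1
      simp only [hG]
      have hexp : exp (-(lamg * c)) * exp (-(lamg * (s - c))) = exp (-(lamg * s)) := by
        rw [← Real.exp_add]; congr 1; ring
      rw [← hexp]
      ring
    rw [setLIntegral_congr_fun measurableSet_Ioo hcong]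
    have hint : IntegrableOn (fun c : ℝ => (lamg ^ 2 * exp (-(lamg * s)) / s ^ n)
        * (c + eps * (s - c)) ^ (n + k)) (Ioo 0 s) := by
      exact ((by fun_prop : Continuous fun c : ℝ =>
        (lamg ^ 2 * exp (-(lamg * s)) / s ^ n) * (c + eps * (s - c)) ^ (n + k)).integrableOn_Icc
        ).mono_set Ioo_subset_Icc_self
    rw [← ofReal_integral_eq_lintegral_ofReal hint ?nn]
    case nn =>
      filter_upwards [ae_restrict_mem measurableSet_Ioo] with c hc
      have h1 : 0 < c + eps * (s - c) := by nlinarith [mul_pos he (sub_pos.mpr hc.2), hc.1]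
      positivity
    congr 1
    rw [← integral_Ioc_eq_integral_Ioo, ← intervalIntegral.integral_of_le hsp.le,
      intervalIntegral.integral_const_mul, hpoly s hsp]
    have hsn : (s:ℝ) ^ n ≠ 0 := pow_ne_zero _ (ne_of_gt hsp)
    field_simp
    ring
  rw [setLIntegral_congr_fun measurableSet_Ioi hstep5]
  -- Step 6: the gamma integral
  have hnn : 0 ≤ᵐ[volume.restrict (Ioi (0:ℝ))]
      fun s => A * lamg ^ 2 * (s ^ (k + 1) * exp (-(lamg * s))) := by
    filter_upwards [ae_restrict_mem measurableSet_Ioi] with s hs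
    have : (0:ℝ) < s := hs
    positivity
  have hi : Integrable (fun s : ℝ => A * lamg ^ 2 * (s ^ (k + 1) * exp (-(lamg * s))))
      (volume.restrict (Ioi 0)) := (gamma_int_on lamg hl (k + 1)).const_mul (A * lamg ^ 2)
  rw [← ofReal_integral_eq_lintegral_ofReal hi hnn]
  congr 1
  rw [MeasureTheory.integral_const_mul, gamma_int_val lamg hl (k + 1)]
  have hlam : lamg ≠ 0 := ne_of_gt hl
  field_simp
  ring

end AuxTimingOffset

section
open Set ENNReal Nat

/-- If `C, D` are independent `Exp(λ_g)` random variables and `0 < ε_1 ≤ 1`, then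
`ν = (C + ε_1 D)²/(C + D)` has variance
`2(17 + 7ε_1 − 3ε_1² + 7ε_1³ + 17ε_1⁴)/(45 λ_g²)`. -/
theorem timing_offset_effective_power_variance
    {Ω : Type*} [MeasureSpace Ω] [IsProbabilityMeasure (ℙ : Measure Ω)]
    (lamg : ℝ) (hlamg : 0 < lamg)
    (eps1 : ℝ) (heps1 : 0 < eps1) (heps1' : eps1 ≤ 1)
    (C D : Ω → ℝ) (hC : Measurable C) (hD : Measurable D)
    (hindep : IndepFun C D ℙ)
    (hClaw : Measure.map C ℙ = expMeasure lamg)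
    (hDlaw : Measure.map D ℙ = expMeasure lamg) :
    variance (fun ω => (C ω + eps1 * D ω) ^ 2 / (C ω + D ω)) ℙ
      = 2 * (17 + 7 * eps1 - 3 * eps1 ^ 2 + 7 * eps1 ^ 3 + 17 * eps1 ^ 4)
          / (45 * lamg ^ 2) := by
  set ν : Ω → ℝ := fun ω => (C ω + eps1 * D ω) ^ 2 / (C ω + D ω) with hν
  have hνm : Measurable ν := by fun_prop
  -- joint law
  have hmap : Measure.map (fun ω => (C ω, D ω)) ℙ
      = (expMeasure lamg).prod (expMeasure lamg) := by
    have h := (indepFun_iff_map_prod_eq_prod_map_map hC.aemeasurable hD.aemeasurable).mp hindep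
    rw [hClaw, hDlaw] at h
    exact h
  -- a.e. nonnegativity
  have hC0 : ∀ᵐ ω ∂ℙ, 0 ≤ C ω := by
    rw [ae_iff]
    have h1 : {ω | ¬0 ≤ C ω} = C ⁻¹' (Iio 0) := by ext ω; simp [not_le]
    rw [h1, ← Measure.map_apply hC measurableSet_Iio, hClaw]
    show (volume.withDensity (exponentialPDF lamg)) (Iio 0) = 0
    rw [withDensity_apply _ measurableSet_Iio]
    exact lintegral_exponentialPDF_of_nonpos le_rfl
  have hD0 : ∀ᵐ ω ∂ℙ, 0 ≤ D ω := by
    rw [ae_iff]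
    have h1 : {ω | ¬0 ≤ D ω} = D ⁻¹' (Iio 0) := by ext ω; simp [not_le]
    rw [h1, ← Measure.map_apply hD measurableSet_Iio, hDlaw]
    show (volume.withDensity (exponentialPDF lamg)) (Iio 0) = 0
    rw [withDensity_apply _ measurableSet_Iio]
    exact lintegral_exponentialPDF_of_nonpos le_rfl
  have hνnn : 0 ≤ᵐ[ℙ] ν := by
    filter_upwards [hC0, hD0] with ω h1 h2
    exact div_nonneg (sq_nonneg _) (by linarith)
  -- first moment
  have key1 : ∫⁻ ω, ENNReal.ofReal (ν ω) ∂ℙ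
      = ENNReal.ofReal ((1 + eps1 + eps1 ^ 2) / 3 * 2 / lamg) := by
    calc ∫⁻ ω, ENNReal.ofReal (ν ω) ∂ℙ
        = ∫⁻ p : ℝ × ℝ, ENNReal.ofReal ((p.1 + eps1 * p.2) ^ (1 + 1) / (p.1 + p.2) ^ 1)
            ∂((expMeasure lamg).prod (expMeasure lamg)) := by
          rw [← hmap, lintegral_map (by fun_prop) (hC.prodMk hD)]
          refine lintegral_congr fun ω => ?_
          congr 1
          simp [hν]
      _ = ENNReal.ofReal ((1 + eps1 + eps1 ^ 2) / 3 * ((1 + 1)! : ℝ) / lamg ^ 1) :=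
          master lamg eps1 hlamg heps1 1 1 ((1 + eps1 + eps1 ^ 2) / 3)
            (by positivity) (fun s hs => by norm_num [poly_int_sq])
      _ = ENNReal.ofReal ((1 + eps1 + eps1 ^ 2) / 3 * 2 / lamg) := by
          norm_num [Nat.factorial]
  have key2 : ∫⁻ ω, ENNReal.ofReal (ν ω ^ 2) ∂ℙ
      = ENNReal.ofReal ((1 + eps1 + eps1 ^ 2 + eps1 ^ 3 + eps1 ^ 4) / 5 * 6 / lamg ^ 2) := by
    calc ∫⁻ ω, ENNReal.ofReal (ν ω ^ 2) ∂ℙ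
        = ∫⁻ p : ℝ × ℝ, ENNReal.ofReal ((p.1 + eps1 * p.2) ^ (2 + 2) / (p.1 + p.2) ^ 2)
            ∂((expMeasure lamg).prod (expMeasure lamg)) := by
          rw [← hmap, lintegral_map (by fun_prop) (hC.prodMk hD)]
          refine lintegral_congr fun ω => ?_
          congr 1
          norm_num [hν, div_pow, ← pow_mul]
      _ = ENNReal.ofReal ((1 + eps1 + eps1 ^ 2 + eps1 ^ 3 + eps1 ^ 4) / 5 * ((2 + 1)! : ℝ)
            / lamg ^ 2) :=
          master lamg eps1 hlamg heps1 2 2 ((1 + eps1 + eps1 ^ 2 + eps1 ^ 3 + eps1 ^ 4) / 5)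
            (by positivity) (fun s hs => by norm_num [poly_int_qu])
      _ = ENNReal.ofReal ((1 + eps1 + eps1 ^ 2 + eps1 ^ 3 + eps1 ^ 4) / 5 * 6 / lamg ^ 2) := by
          norm_num [Nat.factorial]
  -- moments as real integrals
  have E1 : ∫ ω, ν ω ∂ℙ = (1 + eps1 + eps1 ^ 2) / 3 * 2 / lamg := by
    rw [integral_eq_lintegral_of_nonneg_ae hνnn hνm.aestronglyMeasurable, key1,
      ENNReal.toReal_ofReal (by positivity)]
  have hν2nn : 0 ≤ᵐ[ℙ] fun ω => ν ω ^ 2 := ae_of_all _ fun ω => sq_nonneg _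
  have E2 : ∫ ω, ν ω ^ 2 ∂ℙ
      = (1 + eps1 + eps1 ^ 2 + eps1 ^ 3 + eps1 ^ 4) / 5 * 6 / lamg ^ 2 := by
    rw [integral_eq_lintegral_of_nonneg_ae hν2nn (hνm.pow_const 2).aestronglyMeasurable, key2,
      ENNReal.toReal_ofReal (by positivity)]
  -- Memℒp
  have hint2 : Integrable (fun ω => ν ω ^ 2) ℙ := by
    refine ⟨(hνm.pow_const 2).aestronglyMeasurable, ?_⟩
    rw [hasFiniteIntegral_iff_ofReal hν2nn, key2]
    exact ofReal_lt_top
  have hmem : MemLp ν 2 ℙ := (memLp_two_iff_integrable_sq hνm.aestronglyMeasurable).mpr hint2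
  rw [hν] at hmem ⊢
  rw [variance_eq_sub hmem]
  have e2' : (∫ ω, ((fun ω => (C ω + eps1 * D ω) ^ 2 / (C ω + D ω)) ^ 2) ω ∂ℙ)
      = ∫ ω, ν ω ^ 2 ∂ℙ := by rfl
  show (∫ ω, ((fun ω => (C ω + eps1 * D ω) ^ 2 / (C ω + D ω)) ^ 2) ω ∂ℙ)
      - (∫ ω, ν ω ∂ℙ) ^ 2 = _
  rw [e2', E1, E2]
  have hlam : lamg ≠ 0 := ne_of_gt hlamg
  field_simp
  ring

end
end

section
/- Let C and D be independent, each exponentially distributed with rate λ_g > 0, and let 0 < ε_1 < 1. Then the random variable R = (C + ε_1 D)² / (C + D) has probability density function, with respect to Lebesgue measure, f_R(r) = [λ_g / (4(ε_1 − 1))] · [ (√π / √(λ_g r)) · ( erf(√(λ_g r)) − erf(√(λ_g r)/ε_1) ) + (2/ε_1) e^{−λ_g r / ε_1²} − 2 e^{−λ_g r} ] for r > 0, where erf(x) = (2/√π) ∫_0^x e^{−t²} dt. -/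
open MeasureTheory ProbabilityTheory Real

/-- The Gauss error function `erf x = (2/√π) ∫_0^x e^{−t²} dt`. -/
noncomputable def erf (x : ℝ) : ℝ := 2 / Real.sqrt π * ∫ t in (0 : ℝ)..x, Real.exp (-t ^ 2)


section TimingOffsetAux

open MeasureTheory ProbabilityTheory Real ContinuousLinearMap
open scoped ENNReal

lemma cont_exp_neg_sq : Continuous fun t : ℝ => Real.exp (-t ^ 2) := by continuity

lemma hasDerivAt_erf (x : ℝ) : HasDerivAt erf (2 / Real.sqrt π * Real.exp (-x ^ 2)) x := by
  have h : HasDerivAt (fun y => ∫ t in (0:ℝ)..y, Real.exp (-t ^ 2)) (Real.exp (-x ^ 2)) x := by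
    refine intervalIntegral.integral_hasDerivAt_right
      (cont_exp_neg_sq.intervalIntegrable _ _) ?_ cont_exp_neg_sq.continuousAt
    exact cont_exp_neg_sq.stronglyMeasurable.stronglyMeasurableAtFilter
  exact h.const_mul (2 / Real.sqrt π)

noncomputable def Gfun (a u : ℝ) : ℝ :=
  1 / (2*a) * (1/u) * Real.exp (-a / u^2) - Real.sqrt π / (4*a*Real.sqrt a) * erf (Real.sqrt a / u)

lemma alg (a u E sa sπ : ℝ) (ha : a ≠ 0) (hu : u ≠ 0) (hsa0 : sa ≠ 0) (hsπ : sπ ≠ 0) :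
    1/(2*a) * ((-(1/u^2)) * E + (1/u) * (E * (2*a/u^3))) - sπ/(4*a*sa) * ((2/sπ * E) * (-(sa/u^2)))
      = E/u^4 := by
  field_simp
  ring

lemma hasDerivAt_Gfun (a : ℝ) (ha : 0 < a) {u : ℝ} (hu : 0 < u) :
    HasDerivAt (Gfun a) (Real.exp (-a / u^2) / u^4) u := by
  have hu0 : u ≠ 0 := ne_of_gt hu
  have hu20 : u^2 ≠ 0 := pow_ne_zero 2 hu0
  have hsa : Real.sqrt a ^ 2 = a := Real.sq_sqrt ha.le
  have hsa0 : Real.sqrt a ≠ 0 := by positivity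
  have hπ : Real.sqrt π ≠ 0 := by
    have := Real.pi_pos; positivity
  have h1 : HasDerivAt (fun v : ℝ => 1/v) (-(1/u^2)) u := by
    have := (hasDerivAt_const u (1:ℝ)).div (hasDerivAt_id u) hu0
    refine this.congr_deriv ?_
    simp only [id]
    field_simp
    ring
  have h2 : HasDerivAt (fun v : ℝ => -a / v^2) (2*a/u^3) u := by
    have := (hasDerivAt_const u (-a)).div (hasDerivAt_pow 2 u) hu20
    refine this.congr_deriv ?_
    field_simp
    ring
  have h3 : HasDerivAt (fun v : ℝ => Real.exp (-a / v^2)) (Real.exp (-a/u^2) * (2*a/u^3)) u :=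
    (Real.hasDerivAt_exp _).comp u h2
  have h4 : HasDerivAt (fun v : ℝ => Real.sqrt a / v) (-(Real.sqrt a / u^2)) u := by
    have := (hasDerivAt_const u (Real.sqrt a)).div (hasDerivAt_id u) hu0
    refine this.congr_deriv ?_
    simp only [id]
    field_simp
    ring
  have h5 : HasDerivAt (fun v : ℝ => erf (Real.sqrt a / v))
      ((2 / Real.sqrt π * Real.exp (-a/u^2)) * (-(Real.sqrt a / u^2))) u := by
    have houter := hasDerivAt_erf (Real.sqrt a / u)
    have heq : (Real.sqrt a / u) ^ 2 = a / u^2 := by rw [div_pow, hsa]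
    rw [heq] at houter
    have := houter.comp u h4
    simpa [Function.comp_def, neg_div] using this
  have h6 : HasDerivAt (fun v : ℝ => 1 / (2*a) * (1/v) * Real.exp (-a / v^2))
      (1 / (2*a) * ((-(1/u^2)) * Real.exp (-a/u^2) + (1/u) * (Real.exp (-a/u^2) * (2*a/u^3)))) u := by
    have h7 := (h1.mul h3).const_mul (1/(2*a))
    simpa only [← mul_assoc, Pi.mul_apply] using h7
  have h8 := h6.sub (h5.const_mul (Real.sqrt π / (4*a*Real.sqrt a)))
  have h9 : (fun v => 1 / (2*a) * (1/v) * Real.exp (-a / v^2)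
      - Real.sqrt π / (4*a*Real.sqrt a) * erf (Real.sqrt a / v)) = Gfun a := rfl
  simp only [Pi.sub_def] at h8
  rw [h9] at h8
  refine h8.congr_deriv ?_
  exact alg a u _ _ _ (ne_of_gt ha) hu0 hsa0 hπ

lemma integral_key (a eps : ℝ) (ha : 0 < a) (he : 0 < eps) (he1 : eps < 1) :
    ∫ u in eps..(1:ℝ), Real.exp (-a / u^2) / u^4 = Gfun a 1 - Gfun a eps := by
  refine intervalIntegral.integral_eq_sub_of_hasDerivAt (fun u hu => ?_) ?_
  · have hpos : 0 < u := by
      rcases Set.mem_uIcc.1 hu with h | h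
      · linarith [h.1]
      · linarith [h.1]
    exact hasDerivAt_Gfun a ha hpos
  · apply ContinuousOn.intervalIntegrable
    have hne : ∀ x ∈ Set.uIcc eps 1, x ^ 2 ≠ (0:ℝ) := by
      intro x hx
      have : 0 < x := by
        rcases Set.mem_uIcc.1 hx with h | h
        · linarith [h.1]
        · linarith [h.1]
      positivity
    have hne4 : ∀ x ∈ Set.uIcc eps 1, x ^ 4 ≠ (0:ℝ) := by
      intro x hx
      have : 0 < x := by
        rcases Set.mem_uIcc.1 hx with h | h
        · linarith [h.1]
        · linarith [h.1]
      positivity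
    exact (Real.continuous_exp.comp_continuousOn
      (continuousOn_const.div (continuousOn_pow 2) hne)).div (continuousOn_pow 4) hne4


noncomputable def Lmat (a b c d : ℝ) : ℝ × ℝ →L[ℝ] ℝ × ℝ :=
  (a • fst ℝ ℝ ℝ + b • snd ℝ ℝ ℝ).prod (c • fst ℝ ℝ ℝ + d • snd ℝ ℝ ℝ)

lemma Lmat_det (a b c d : ℝ) : (Lmat a b c d).det = a * d - b * c := by
  have : (Lmat a b c d).det = LinearMap.det ((Lmat a b c d) : ℝ × ℝ →ₗ[ℝ] ℝ × ℝ) := rfl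
  rw [this, ← LinearMap.det_toMatrix (Module.Basis.finTwoProd ℝ), Matrix.det_fin_two]
  simp [LinearMap.toMatrix_apply, Lmat, Module.Basis.finTwoProd_zero, Module.Basis.finTwoProd_one]

noncomputable def Phi (eps : ℝ) (p : ℝ × ℝ) : ℝ × ℝ :=
  (p.1 * (p.2 - eps) / (1 - eps), p.1 * (1 - p.2) / (1 - eps))

noncomputable def PhiDeriv (eps : ℝ) (p : ℝ × ℝ) : ℝ × ℝ →L[ℝ] ℝ × ℝ :=
  Lmat ((p.2 - eps) / (1 - eps)) (p.1 / (1 - eps))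
       ((1 - p.2) / (1 - eps)) (-(p.1 / (1 - eps)))

lemma PhiDeriv_det (eps : ℝ) (p : ℝ × ℝ) (he : eps ≠ 1) :
    (PhiDeriv eps p).det = -(p.1 / (1 - eps)) := by
  rw [PhiDeriv, Lmat_det]
  have h : (1:ℝ) - eps ≠ 0 := by intro h; apply he; linarith
  field_simp
  ring

lemma hasFDerivAt_Phi (eps : ℝ) (p : ℝ × ℝ) :
    HasFDerivAt (Phi eps) (PhiDeriv eps p) p := by
  have h1 : HasFDerivAt (fun q : ℝ × ℝ => q.1 * (q.2 - eps) / (1 - eps))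
      (((p.2 - eps) / (1 - eps)) • fst ℝ ℝ ℝ + (p.1 / (1 - eps)) • snd ℝ ℝ ℝ) p := by
    have hm : HasFDerivAt (fun q : ℝ × ℝ => q.1 * (q.2 - eps))
        (p.1 • snd ℝ ℝ ℝ + (p.2 - eps) • fst ℝ ℝ ℝ) p :=
      (hasFDerivAt_fst (E := ℝ) (F := ℝ)).mul ((hasFDerivAt_snd).sub_const eps)
    have := hm.const_mul (1 / (1 - eps))
    have heq : (fun q : ℝ × ℝ => 1 / (1 - eps) * (q.1 * (q.2 - eps)))
        = fun q : ℝ × ℝ => q.1 * (q.2 - eps) / (1 - eps) := by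
      funext q; ring
    rw [heq] at this
    refine this.congr_fderiv ?_
    refine ContinuousLinearMap.ext fun v => ?_
    simp [smul_smul]
    ring
  have h2 : HasFDerivAt (fun q : ℝ × ℝ => q.1 * (1 - q.2) / (1 - eps))
      (((1 - p.2) / (1 - eps)) • fst ℝ ℝ ℝ + (-(p.1 / (1 - eps))) • snd ℝ ℝ ℝ) p := by
    have hm : HasFDerivAt (fun q : ℝ × ℝ => q.1 * (1 - q.2))
        (p.1 • (-(snd ℝ ℝ ℝ)) + (1 - p.2) • fst ℝ ℝ ℝ) p :=
      (hasFDerivAt_fst (E := ℝ) (F := ℝ)).mul ((hasFDerivAt_snd).const_sub 1)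
    have := hm.const_mul (1 / (1 - eps))
    have heq : (fun q : ℝ × ℝ => 1 / (1 - eps) * (q.1 * (1 - q.2)))
        = fun q : ℝ × ℝ => q.1 * (1 - q.2) / (1 - eps) := by
      funext q; ring
    rw [heq] at this
    refine this.congr_fderiv ?_
    refine ContinuousLinearMap.ext fun v => ?_
    simp [smul_smul]
    ring
  exact h1.prodMk h2


lemma f_eq_core (lam eps a sa E1 E2 T1 T2 : ℝ) (hlam : lam ≠ 0) (hsa : sa^2 = a)
    (hsa0 : sa ≠ 0) (he0 : eps ≠ 0) (hne : (1:ℝ) - eps ≠ 0) (hπ : Real.sqrt π ≠ 0) :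
    lam * a / (1-eps) * ((1/(2*a) * (1/1) * E1 - Real.sqrt π/(4*a*sa) * T1)
        - (1/(2*a) * (1/eps) * E2 - Real.sqrt π/(4*a*sa) * T2))
      = lam / (4*(eps-1)) * (Real.sqrt π / sa * (T1 - T2) + 2/eps * E2 - 2*E1) := by
  subst hsa
  have hne' : eps - 1 ≠ 0 := fun h => hne (by linarith)
  field_simp
  ring

lemma f_eq (lamg eps1 r : ℝ) (hl : 0 < lamg) (he : 0 < eps1) (he1 : eps1 < 1) (hr : 0 < r) :
    lamg^2 * r / (1 - eps1) * (Gfun (lamg*r) 1 - Gfun (lamg*r) eps1)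
      = lamg / (4 * (eps1 - 1)) *
          (Real.sqrt π / Real.sqrt (lamg * r) *
              (erf (Real.sqrt (lamg * r)) - erf (Real.sqrt (lamg * r) / eps1))
            + 2 / eps1 * Real.exp (-(lamg * r) / eps1 ^ 2)
            - 2 * Real.exp (-(lamg * r))) := by
  have hsa : Real.sqrt (lamg * r) ^ 2 = lamg * r := Real.sq_sqrt (by positivity)
  have hsa0 : Real.sqrt (lamg * r) ≠ 0 := by positivity
  have hπ : Real.sqrt π ≠ 0 := by have := Real.pi_pos; positivity
  have hne : (1:ℝ) - eps1 ≠ 0 := by intro h; linarith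
  have h2 : lamg^2 * r = lamg * (lamg * r) := by ring
  have h3 : -(lamg*r) / (1:ℝ)^2 = -(lamg*r) := by norm_num
  have h4 : Real.sqrt (lamg*r) / (1:ℝ) = Real.sqrt (lamg*r) := by norm_num
  rw [h2, Gfun, Gfun, h3, h4]
  exact f_eq_core lamg eps1 (lamg*r) (Real.sqrt (lamg*r)) (Real.exp (-(lamg*r)))
    (Real.exp (-(lamg*r)/eps1^2)) (erf (Real.sqrt (lamg*r)))
    (erf (Real.sqrt (lamg*r)/eps1)) (ne_of_gt hl) hsa hsa0 (ne_of_gt he) hne hπ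


lemma lintegral_slice (lamg eps1 r : ℝ) (hl : 0 < lamg) (he : 0 < eps1) (he1 : eps1 < 1)
    (hr : 0 < r) :
    ∫⁻ u in Set.Ioo eps1 1,
        ENNReal.ofReal (lamg^2 * r / (1 - eps1) * (Real.exp (-(lamg*r) / u^2) / u^4))
      = ENNReal.ofReal (lamg / (4 * (eps1 - 1)) *
          (Real.sqrt π / Real.sqrt (lamg * r) *
              (erf (Real.sqrt (lamg * r)) - erf (Real.sqrt (lamg * r) / eps1))
            + 2 / eps1 * Real.exp (-(lamg * r) / eps1 ^ 2)
            - 2 * Real.exp (-(lamg * r)))) := by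
  have hponx : ∀ x ∈ Set.Icc eps1 1, x ≠ (0:ℝ) := fun x hx => ne_of_gt (lt_of_lt_of_le he hx.1)
  have hcont : ContinuousOn
      (fun u : ℝ => lamg^2 * r / (1 - eps1) * (Real.exp (-(lamg*r) / u^2) / u^4))
      (Set.Icc eps1 1) := by
    have hne2 : ∀ x ∈ Set.Icc eps1 1, x ^ 2 ≠ (0:ℝ) := fun x hx => pow_ne_zero 2 (hponx x hx)
    have hne4 : ∀ x ∈ Set.Icc eps1 1, x ^ 4 ≠ (0:ℝ) := fun x hx => pow_ne_zero 4 (hponx x hx)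
    exact continuousOn_const.mul ((Real.continuous_exp.comp_continuousOn
      (continuousOn_const.div (continuousOn_pow 2) hne2)).div (continuousOn_pow 4) hne4)
  have hint : IntegrableOn
      (fun u : ℝ => lamg^2 * r / (1 - eps1) * (Real.exp (-(lamg*r) / u^2) / u^4))
      (Set.Ioo eps1 1) volume :=
    (hcont.integrableOn_Icc).mono_set Set.Ioo_subset_Icc_self
  have hnn : 0 ≤ᵐ[volume.restrict (Set.Ioo eps1 1)]
      fun u : ℝ => lamg^2 * r / (1 - eps1) * (Real.exp (-(lamg*r) / u^2) / u^4) := by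
    refine (ae_restrict_iff' measurableSet_Ioo).2 (Filter.Eventually.of_forall fun u hu => ?_)
    have hu0 : 0 < u := lt_trans he hu.1
    have h1e : 0 < 1 - eps1 := by linarith
    positivity
  rw [← ofReal_integral_eq_lintegral_ofReal hint hnn]
  congr 1
  rw [← MeasureTheory.integral_Ioc_eq_integral_Ioo, ← intervalIntegral.integral_of_le he1.le,
    intervalIntegral.integral_const_mul, integral_key (lamg*r) eps1 (by positivity) he he1]
  exact f_eq lamg eps1 r hl he he1 hr


end TimingOffsetAux

open scoped ENNReal

set_option maxHeartbeats 1000000 in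
/-- If `C, D` are independent `Exp(λ_g)` random variables and `0 < ε_1 < 1`, then
`R = (C + ε_1 D)²/(C + D)` has probability density function, with respect to Lebesgue measure,
`f_R(r) = (λ_g/(4(ε_1 − 1))) [ (√π/√(λ_g r)) (erf(√(λ_g r)) − erf(√(λ_g r)/ε_1))
+ (2/ε_1) e^{−λ_g r/ε_1²} − 2 e^{−λ_g r} ]` for `r > 0`. -/
theorem timing_offset_effective_power_pdf
    {Ω : Type*} [MeasureSpace Ω] [IsProbabilityMeasure (ℙ : Measure Ω)]
    (lamg : ℝ) (hlamg : 0 < lamg)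
    (eps1 : ℝ) (heps1 : 0 < eps1) (heps1' : eps1 < 1)
    (C D : Ω → ℝ) (hC : Measurable C) (hD : Measurable D)
    (hindep : IndepFun C D ℙ)
    (hClaw : Measure.map C ℙ = expMeasure lamg)
    (hDlaw : Measure.map D ℙ = expMeasure lamg) :
    Measure.map (fun ω => (C ω + eps1 * D ω) ^ 2 / (C ω + D ω)) ℙ
      = volume.withDensity (fun r =>
          ENNReal.ofReal (if 0 < r then
              lamg / (4 * (eps1 - 1)) *
                (Real.sqrt π / Real.sqrt (lamg * r) *
                    (erf (Real.sqrt (lamg * r)) - erf (Real.sqrt (lamg * r) / eps1))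
                  + 2 / eps1 * Real.exp (-(lamg * r) / eps1 ^ 2)
                  - 2 * Real.exp (-(lamg * r)))
            else 0)) := by
  classical
  haveI : IsProbabilityMeasure (expMeasure lamg) := isProbabilityMeasure_expMeasure hlamg
  set gg : ℝ × ℝ → ℝ := fun z => (z.1 + eps1 * z.2) ^ 2 / (z.1 + z.2) with hgg_def
  have hgm : Measurable gg :=
    ((measurable_fst.add (measurable_snd.const_mul eps1)).pow_const 2).div
      (measurable_fst.add measurable_snd)
  have hpair : Measure.map (fun ω => (C ω, D ω)) ℙ = (expMeasure lamg).prod (expMeasure lamg) := by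
    nth_rewrite 2 [← hDlaw]
    rw [← hClaw]
    exact (ProbabilityTheory.indepFun_iff_map_prod_eq_prod_map_map hC.aemeasurable
      hD.aemeasurable).mp hindep
  have hcomp : Measure.map (fun ω => (C ω + eps1 * D ω) ^ 2 / (C ω + D ω)) ℙ
      = Measure.map gg ((expMeasure lamg).prod (expMeasure lamg)) := by
    rw [← hpair, Measure.map_map hgm (hC.prodMk hD)]
    rfl
  rw [hcomp]
  have h1e : (0:ℝ) < 1 - eps1 := by linarith
  have hne : (1:ℝ) - eps1 ≠ 0 := ne_of_gt h1e
  have hpdfm : Measurable (exponentialPDF lamg) :=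
    (measurable_exponentialPDFReal lamg).ennreal_ofReal
  set ρ : ℝ × ℝ → ℝ≥0∞ := fun z => exponentialPDF lamg z.1 * exponentialPDF lamg z.2 with hρ_def
  have hρm : Measurable ρ := (hpdfm.comp measurable_fst).mul (hpdfm.comp measurable_snd)
  have hexp_wd : expMeasure lamg = volume.withDensity (exponentialPDF lamg) := rfl
  have hν : (expMeasure lamg).prod (expMeasure lamg)
      = (volume : Measure (ℝ × ℝ)).withDensity ρ := by
    rw [hexp_wd]
    haveI : IsProbabilityMeasure ((volume : Measure ℝ).withDensity (exponentialPDF lamg)) :=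
      hexp_wd ▸ ‹IsProbabilityMeasure (expMeasure lamg)›
    refine Measure.prod_eq fun s t hs ht => ?_
    rw [withDensity_apply _ (hs.prod ht), Measure.volume_eq_prod, ← Measure.prod_restrict,
      MeasureTheory.lintegral_prod_mul hpdfm.aemeasurable hpdfm.aemeasurable,
      withDensity_apply _ hs, withDensity_apply _ ht]
  -- sets
  set T : Set (ℝ × ℝ) := Set.Ioi 0 ×ˢ Set.Ioi 0 with hT_def
  have hTm : MeasurableSet T := measurableSet_Ioi.prod measurableSet_Ioi
  set W : Set (ℝ × ℝ) := Set.Ioi 0 ×ˢ Set.Ioo eps1 1 with hW_def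
  have hWm : MeasurableSet W := measurableSet_Ioi.prod measurableSet_Ioo
  have hPhic : Continuous (Phi eps1) := by
    apply Continuous.prodMk
    · exact ((continuous_fst.mul (continuous_snd.sub continuous_const)).div_const _)
    · exact ((continuous_fst.mul (continuous_const.sub continuous_snd)).div_const _)
  have hPhim : Measurable (Phi eps1) := hPhic.measurable
  have hexp0 : expMeasure lamg (Set.Iic 0) = 0 := by
    rw [hexp_wd, withDensity_apply _ measurableSet_Iic]
    rw [show Set.Iic (0:ℝ) = Set.Iio 0 ∪ {0} from (Set.Iio_union_right).symm]
    refine le_antisymm ?_ zero_le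
    refine le_trans (lintegral_union (measurableSet_singleton 0) ?_).le ?_
    · exact Set.disjoint_left.2 fun x hx hx' => absurd (Set.mem_singleton_iff.1 hx' ▸ hx) (by simp)
    · have h1 : ∫⁻ y in Set.Iio 0, exponentialPDF lamg y = 0 :=
        lintegral_exponentialPDF_of_nonpos le_rfl
      have h2 : ∫⁻ y in ({0} : Set ℝ), exponentialPDF lamg y = 0 := by
        rw [Measure.restrict_eq_zero.2 (by simp), lintegral_zero_measure]
      rw [h1, h2, add_zero]
  have hTc : (expMeasure lamg).prod (expMeasure lamg) Tᶜ = 0 := by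
    have hsub : Tᶜ ⊆ (Set.Iic 0 ×ˢ Set.univ) ∪ (Set.univ ×ˢ Set.Iic 0) := by
      intro z hz
      rw [Set.mem_compl_iff, hT_def, Set.mem_prod] at hz
      rcases not_and_or.mp hz with h | h
      · exact Or.inl ⟨by simpa using h, Set.mem_univ _⟩
      · exact Or.inr ⟨Set.mem_univ _, by simpa using h⟩
    refine measure_mono_null hsub (measure_union_null ?_ ?_)
    · rw [Measure.prod_prod, hexp0, zero_mul]
    · rw [Measure.prod_prod, hexp0, mul_zero]
  refine Measure.ext fun A hA => ?_
  rw [Measure.map_apply hgm hA, withDensity_apply _ hA]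
  have step1 : (expMeasure lamg).prod (expMeasure lamg) (gg ⁻¹' A)
      = (expMeasure lamg).prod (expMeasure lamg) (gg ⁻¹' A ∩ T) := by
    rw [← measure_inter_add_diff (gg ⁻¹' A) hTm]
    have h0 : (expMeasure lamg).prod (expMeasure lamg) (gg ⁻¹' A \ T) = 0 :=
      measure_mono_null (fun x hx => hx.2) hTc
    rw [h0, add_zero]
  -- image identity
  have hPhiW_img : Phi eps1 '' W = T := by
    ext z
    constructor
    · rintro ⟨⟨s, u⟩, ⟨hs, hu⟩, rfl⟩
      simp only [Set.mem_Ioi, Set.mem_Ioo] at hs hu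
      constructor
      · have : 0 < s * (u - eps1) / (1 - eps1) := by
          apply div_pos (mul_pos hs (by linarith)) h1e
        simpa [Phi] using this
      · have : 0 < s * (1 - u) / (1 - eps1) := by
          apply div_pos (mul_pos hs (by linarith)) h1e
        simpa [Phi] using this
    · rintro ⟨hc, hd⟩
      obtain ⟨c, d⟩ := z
      simp only [Set.mem_Ioi] at hc hd
      have hcd : 0 < c + d := by linarith
      have hcd0 : c + d ≠ 0 := ne_of_gt hcd
      refine ⟨(c + d, (c + eps1 * d) / (c + d)), ⟨?_, ?_, ?_⟩, ?_⟩
      · exact hcd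
      · rw [lt_div_iff₀ hcd]; nlinarith
      · rw [div_lt_one hcd]; nlinarith
      · simp only [Phi]
        refine Prod.ext ?_ ?_
        · show (c + d) * ((c + eps1 * d) / (c + d) - eps1) / (1 - eps1) = c
          field_simp
          ring
        · show (c + d) * (1 - (c + eps1 * d) / (c + d)) / (1 - eps1) = d
          field_simp
          ring
  have hinj : Set.InjOn (Phi eps1) W := by
    rintro ⟨s, u⟩ ⟨hs, hu⟩ ⟨s', u'⟩ ⟨hs', hu'⟩ h
    simp only [Set.mem_Ioi, Set.mem_Ioo] at hs hu hs' hu'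
    have h1 := congrArg Prod.fst h
    have h2 := congrArg Prod.snd h
    simp only [Phi] at h1 h2
    have E1 : s * (u - eps1) = s' * (u' - eps1) := by
      field_simp at h1; linarith
    have E2 : s * (1 - u) = s' * (1 - u') := by
      field_simp at h2; linarith
    have hss : s = s' := by
      have : s * (1 - eps1) = s' * (1 - eps1) := by nlinarith [E1, E2]
      exact mul_right_cancel₀ hne this
    subst hss
    have huu : u = u' := by
      have hs0 : s ≠ 0 := ne_of_gt hs
      nlinarith [E2]
    rw [huu]
  have himg : gg ⁻¹' A ∩ T = Phi eps1 '' (W ∩ Phi eps1 ⁻¹' (gg ⁻¹' A)) := by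
    rw [Set.image_inter_preimage, hPhiW_img, Set.inter_comm]
  have hQm : MeasurableSet (Phi eps1 ⁻¹' (gg ⁻¹' A)) := hPhim (hgm hA)
  have hBm : MeasurableSet (W ∩ Phi eps1 ⁻¹' (gg ⁻¹' A)) := hWm.inter hQm
  rw [step1, hν, withDensity_apply _ ((hgm hA).inter hTm), himg,
    MeasureTheory.lintegral_image_eq_lintegral_abs_det_fderiv_mul volume hBm
      (fun x _ => (hasFDerivAt_Phi eps1 x).hasFDerivWithinAt)
      (hinj.mono Set.inter_subset_left) ρ]
  -- convert to indicator over W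
  rw [Set.inter_comm W, ← Measure.restrict_restrict hQm,
    ← MeasureTheory.lintegral_indicator hQm]
  -- pointwise simplification on W
  set Fnice : ℝ × ℝ → ℝ≥0∞ := fun x =>
    (A.indicator (fun _ => (1:ℝ≥0∞)) (x.2^2 * x.1)) *
      ENNReal.ofReal (lamg^2 / (1 - eps1) * x.1 * Real.exp (-(lamg * x.1))) with hFnice_def
  have hptW : ∀ x ∈ W, (Phi eps1 ⁻¹' (gg ⁻¹' A)).indicator
      (fun x => ENNReal.ofReal |(PhiDeriv eps1 x).det| * ρ (Phi eps1 x)) x = Fnice x := by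
    rintro ⟨s, u⟩ ⟨hs, hu⟩
    simp only [Set.mem_Ioi, Set.mem_Ioo] at hs hu
    have hu0 : 0 < u := lt_trans heps1 hu.1
    have hc : 0 ≤ s * (u - eps1) / (1 - eps1) :=
      le_of_lt (div_pos (mul_pos hs (by linarith [hu.1])) h1e)
    have hd : 0 ≤ s * (1 - u) / (1 - eps1) :=
      le_of_lt (div_pos (mul_pos hs (by linarith [hu.2])) h1e)
    have hgPhi : gg (Phi eps1 (s, u)) = u^2 * s := by
      simp only [Phi, hgg_def]
      have hnum : s * (u - eps1) / (1 - eps1) + eps1 * (s * (1 - u) / (1 - eps1)) = u * s := by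
        field_simp; ring
      have hden : s * (u - eps1) / (1 - eps1) + s * (1 - u) / (1 - eps1) = s := by
        field_simp; ring
      show (s * (u - eps1) / (1 - eps1) + eps1 * (s * (1 - u) / (1 - eps1))) ^ 2 /
          (s * (u - eps1) / (1 - eps1) + s * (1 - u) / (1 - eps1)) = u^2 * s
      rw [hnum, hden]
      field_simp
    have hval : ENNReal.ofReal |(PhiDeriv eps1 (s, u)).det| * ρ (Phi eps1 (s, u))
        = ENNReal.ofReal (lamg^2 / (1 - eps1) * s * Real.exp (-(lamg * s))) := by
      rw [PhiDeriv_det eps1 (s, u) (by intro h; linarith)]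
      have habs : |(-(((s, u) : ℝ × ℝ).1 / (1 - eps1)))| = s / (1 - eps1) := by
        rw [abs_neg, abs_of_pos (div_pos hs h1e)]
      rw [habs, hρ_def]
      simp only [Phi]
      rw [exponentialPDF_of_nonneg hc, exponentialPDF_of_nonneg hd,
        ← ENNReal.ofReal_mul (by positivity), ← ENNReal.ofReal_mul (by positivity)]
      congr 1
      have hE : Real.exp (-(lamg * (s * (u - eps1) / (1 - eps1)))) *
          Real.exp (-(lamg * (s * (1 - u) / (1 - eps1)))) = Real.exp (-(lamg * s)) := by
        rw [← Real.exp_add]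
        congr 1
        field_simp
        ring
      calc s / (1 - eps1) * (lamg * Real.exp (-(lamg * (s * (u - eps1) / (1 - eps1)))) *
            (lamg * Real.exp (-(lamg * (s * (1 - u) / (1 - eps1))))))
          = lamg^2 / (1-eps1) * s * (Real.exp (-(lamg * (s * (u - eps1) / (1 - eps1)))) *
            Real.exp (-(lamg * (s * (1 - u) / (1 - eps1))))) := by ring
        _ = _ := by rw [hE]
    by_cases hmem : u^2 * s ∈ A
    · have hinQ : ((s, u) : ℝ × ℝ) ∈ Phi eps1 ⁻¹' (gg ⁻¹' A) := by
        simp only [Set.mem_preimage, hgPhi]; exact hmem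
      rw [Set.indicator_of_mem hinQ, hFnice_def]
      simp only []
      rw [Set.indicator_of_mem hmem, one_mul, hval]
    · have hninQ : ((s, u) : ℝ × ℝ) ∉ Phi eps1 ⁻¹' (gg ⁻¹' A) := by
        simp only [Set.mem_preimage, hgPhi]; exact hmem
      rw [Set.indicator_of_notMem hninQ, hFnice_def]
      simp only []
      rw [Set.indicator_of_notMem hmem, zero_mul]
  rw [MeasureTheory.setLIntegral_congr_fun hWm hptW]
  -- product structure and Tonelli
  have hindA : Measurable (A.indicator (fun _ => (1:ℝ≥0∞))) := measurable_const.indicator hA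
  have hFnicem : Measurable Fnice := by
    refine Measurable.mul (hindA.comp ((measurable_snd.pow_const 2).mul measurable_fst)) ?_
    exact ((measurable_fst.const_mul _).mul
      (Real.measurable_exp.comp ((measurable_fst.const_mul lamg).neg))).ennreal_ofReal
  have hrestr : (volume : Measure (ℝ × ℝ)).restrict W
      = ((volume : Measure ℝ).restrict (Set.Ioi 0)).prod
        ((volume : Measure ℝ).restrict (Set.Ioo eps1 1)) := by
    rw [Measure.volume_eq_prod, Measure.prod_restrict, hW_def]
  rw [hrestr, MeasureTheory.lintegral_prod_symm' Fnice hFnicem]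
  -- scaling substitution in the inner integral
  set FF : ℝ → ℝ → ℝ≥0∞ := fun u r => (Set.Ioi (0:ℝ) ∩ A).indicator (fun _ => (1:ℝ≥0∞)) r *
      ENNReal.ofReal (lamg^2 * r / (1 - eps1) * (Real.exp (-(lamg*r) / u^2) / u^4)) with hFF_def
  have hIoiA : MeasurableSet (Set.Ioi (0:ℝ) ∩ A) := measurableSet_Ioi.inter hA
  have hindIA : Measurable ((Set.Ioi (0:ℝ) ∩ A).indicator (fun _ => (1:ℝ≥0∞))) :=
    measurable_const.indicator hIoiA
  have hscale : ∀ u ∈ Set.Ioo eps1 1,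
      (∫⁻ s in Set.Ioi (0:ℝ), Fnice (s, u)) = ∫⁻ r, FF u r := by
    intro u hu
    have hu0 : 0 < u := lt_trans heps1 hu.1
    have hu0' : u ≠ 0 := ne_of_gt hu0
    have hu2 : (0:ℝ) < u^2 := by positivity
    have hu2' : u^2 ≠ 0 := ne_of_gt hu2
    set F : ℝ → ℝ≥0∞ := fun r => (Set.Ioi (0:ℝ) ∩ A).indicator (fun _ => (1:ℝ≥0∞)) r *
        ENNReal.ofReal (lamg^2 / (1 - eps1) * (r / u^2) * Real.exp (-(lamg * r) / u^2))
      with hF_def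
    have hFm : Measurable F := by
      refine Measurable.mul hindIA ?_
      exact (((measurable_id'.div_const _).const_mul _).mul
        (Real.measurable_exp.comp ((measurable_id'.const_mul lamg).neg.div_const _))).ennreal_ofReal
    have step_a : (∫⁻ s in Set.Ioi (0:ℝ), Fnice (s, u)) = ∫⁻ s, F (u^2 * s) := by
      rw [← MeasureTheory.lintegral_indicator measurableSet_Ioi]
      refine lintegral_congr fun s => ?_
      by_cases hs : s ∈ Set.Ioi (0:ℝ)
      · rw [Set.indicator_of_mem hs]
        have hs' : 0 < s := hs
        have hus : 0 < u^2 * s := by positivity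
        have e1 : lamg^2 / (1 - eps1) * ((u^2 * s) / u^2) = lamg^2 / (1 - eps1) * s := by
          field_simp
        have e2 : -(lamg * (u^2 * s)) / u^2 = -(lamg * s) := by field_simp
        rw [hF_def, hFnice_def]
        simp only []
        rw [e1, e2]
        by_cases hmem : u^2 * s ∈ A
        · rw [Set.indicator_of_mem hmem,
            Set.indicator_of_mem (show u^2 * s ∈ Set.Ioi 0 ∩ A from ⟨hus, hmem⟩)]
        · rw [Set.indicator_of_notMem hmem,
            Set.indicator_of_notMem
              (show u^2 * s ∉ Set.Ioi 0 ∩ A from fun h => hmem (Set.mem_of_mem_inter_right h))]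
      · rw [Set.indicator_of_notMem hs]
        have hs' : ¬ 0 < s := hs
        have hnot : u^2 * s ∉ Set.Ioi (0:ℝ) ∩ A := by
          rintro ⟨h1, -⟩
          have hle : u^2 * s ≤ 0 :=
            mul_nonpos_iff.2 (Or.inl ⟨le_of_lt hu2, not_lt.1 hs'⟩)
          exact absurd (Set.mem_Ioi.1 h1) (not_lt.2 hle)
        rw [hF_def]
        simp only []
        rw [Set.indicator_of_notMem hnot, zero_mul]
    have step_b : (∫⁻ s, F (u^2 * s)) = ENNReal.ofReal |(u^2)⁻¹| * ∫⁻ r, F r := by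
      rw [← MeasureTheory.lintegral_map hFm (measurable_id'.const_mul (u^2)),
        Real.map_volume_mul_left hu2', lintegral_smul_measure, smul_eq_mul]
    have step_c : ENNReal.ofReal |(u^2)⁻¹| * (∫⁻ r, F r) = ∫⁻ r, FF u r := by
      rw [← MeasureTheory.lintegral_const_mul' (ENNReal.ofReal |(u^2)⁻¹|) F
        ENNReal.ofReal_ne_top]
      refine lintegral_congr fun r => ?_
      show ENNReal.ofReal |(u^2)⁻¹| * ((Set.Ioi (0:ℝ) ∩ A).indicator (fun _ => (1:ℝ≥0∞)) r *
          ENNReal.ofReal (lamg^2 / (1 - eps1) * (r / u^2) * Real.exp (-(lamg * r) / u^2)))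
        = (Set.Ioi (0:ℝ) ∩ A).indicator (fun _ => (1:ℝ≥0∞)) r *
          ENNReal.ofReal (lamg^2 * r / (1 - eps1) * (Real.exp (-(lamg*r) / u^2) / u^4))
      rw [mul_left_comm, ← ENNReal.ofReal_mul (abs_nonneg _)]
      congr 1
      rw [abs_of_pos (inv_pos.2 hu2)]
      field_simp
    rw [step_a, step_b, step_c]
  rw [MeasureTheory.setLIntegral_congr_fun measurableSet_Ioo
    hscale]
  -- swap the integrals
  have hFFm : Measurable (Function.uncurry FF) := by
    refine Measurable.mul (hindIA.comp measurable_snd) ?_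
    exact (((measurable_snd.const_mul _).div_const _).mul
      ((Real.measurable_exp.comp ((measurable_snd.const_mul lamg).neg.div
        (measurable_fst.pow_const 2))).div (measurable_fst.pow_const 4))).ennreal_ofReal
  rw [MeasureTheory.lintegral_lintegral_swap hFFm.aemeasurable]
  -- conclude via the slice integral
  have hfinal : ∀ r : ℝ, (∫⁻ u in Set.Ioo eps1 1, FF u r)
      = A.indicator (fun r => ENNReal.ofReal (if 0 < r then
          lamg / (4 * (eps1 - 1)) *
            (Real.sqrt π / Real.sqrt (lamg * r) *
                (erf (Real.sqrt (lamg * r)) - erf (Real.sqrt (lamg * r) / eps1))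
              + 2 / eps1 * Real.exp (-(lamg * r) / eps1 ^ 2)
              - 2 * Real.exp (-(lamg * r)))
        else 0)) r := by
    intro r
    by_cases hr : 0 < r
    · by_cases hrA : r ∈ A
      · have h1 : ∀ u : ℝ, FF u r = ENNReal.ofReal
            (lamg^2 * r / (1 - eps1) * (Real.exp (-(lamg*r) / u^2) / u^4)) := by
          intro u
          rw [hFF_def]
          simp only []
          rw [Set.indicator_of_mem (Set.mem_inter (Set.mem_Ioi.2 hr) hrA), one_mul]
        rw [lintegral_congr fun u => h1 u,
          lintegral_slice lamg eps1 r hlamg heps1 heps1' hr,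
          Set.indicator_of_mem hrA, if_pos hr]
      · have h1 : ∀ u : ℝ, FF u r = 0 := by
          intro u
          rw [hFF_def]
          simp only []
          rw [Set.indicator_of_notMem (fun h => hrA h.2), zero_mul]
        rw [lintegral_congr fun u => h1 u, lintegral_zero,
          Set.indicator_of_notMem hrA]
    · have h1 : ∀ u : ℝ, FF u r = 0 := by
        intro u
        rw [hFF_def]
        simp only []
        rw [Set.indicator_of_notMem (fun h => hr h.1), zero_mul]
      rw [lintegral_congr fun u => h1 u, lintegral_zero]
      by_cases hrA : r ∈ A
      · rw [Set.indicator_of_mem hrA, if_neg hr, ENNReal.ofReal_zero]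
      · rw [Set.indicator_of_notMem hrA]
  rw [lintegral_congr hfinal, MeasureTheory.lintegral_indicator hA]
end
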